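/- arXiv:2002.10654 — 3 statements merged into one kernel-verified Lean document; each statement's English description precedes it below -/
import Mathlib

section
/- There is a universal constant C > 0 such that for every partial boolean function f : {0,1}^n → {0,1,*}, every balanced input distribution D = ½D0 + ½D1 for f, every ε ∈ (0,1/2), and every δ ∈ (0,1/2]: corr_ε(f,D) ≤ C · (log(1/ε)/δ²) · corr_{1/2−δ}(f,D). -/
open Finset

/-- A deterministic decision tree over alphabet `α`, querying positions `ι`,
with output labels `β`.  A `node i ch` queries position `i` and has one child per symbol. -/
inductive DTree (α ι β : Type) : Type where
  | leaf : β → DTree α ι β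
  | node : ι → (α → DTree α ι β) → DTree α ι β

namespace DTree

/-- The output of the tree on input `x`. -/
def eval {α ι β : Type} : DTree α ι β → (ι → α) → β
  | .leaf b, _ => b
  | .node i ch, x => (ch (x i)).eval x

/-- The depth of a tree: the maximum number of queries along any root-to-leaf path. -/
def depth {α ι β : Type} [Fintype α] : DTree α ι β → ℕ
  | .leaf _ => 0
  | .node _ ch => 1 + Finset.univ.sup fun a => (ch a).depth

/-- `Input(ℓ)` for the leaf `ℓ` reached by `x`: the set of inputs that follow
the same root-to-leaf path as `x`. -/
def reach {α ι β : Type} : DTree α ι β → (ι → α) → Set (ι → α)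
  | .leaf _, _ => Set.univ
  | .node i ch, x => {y | y i = x i} ∩ (ch (x i)).reach x

/-- For a tree on `k` samples, the set `ℓ_j ⊆ Σ^n` of strings consistent with the
queries made to the `j`-th sample on the path followed by input `x`. -/
def reachJ {α β : Type} {k n : ℕ} :
    DTree α (Fin k × Fin n) β → ((Fin k × Fin n) → α) → Fin k → Set (Fin n → α)
  | .leaf _, _, _ => Set.univ
  | .node p ch, x, j =>
      (if p.1 = j then {y : Fin n → α | y p.2 = x p} else Set.univ) ∩ (ch (x p)).reachJ x j

end DTree

/-- Probability mass of a set `S` under (the mass function of) a distribution `D`. -/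
noncomputable def prS {γ : Type} [Fintype γ] (D : γ → ℝ) (S : Set γ) : ℝ :=
  ∑ x, S.indicator D x

/-- `D` is a probability mass function on the finite type `γ`. -/
def IsDist {γ : Type} [Fintype γ] (D : γ → ℝ) : Prop :=
  (∀ x, 0 ≤ D x) ∧ ∑ x, D x = 1

/-- Likelihood ratio `LR(S) = D1(S)/D0(S)`. -/
noncomputable def LR {γ : Type} [Fintype γ] (D0 D1 : γ → ℝ) (S : Set γ) : ℝ :=
  prS D1 S / prS D0 S

/-- The `k`-fold product distribution `D^k` on `k` samples (input flattened). -/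
noncomputable def prodD {α : Type} {n k : ℕ} (D : (Fin n → α) → ℝ) :
    ((Fin k × Fin n) → α) → ℝ :=
  fun x => ∏ j, D fun i => x (j, i)

/-- `T` is a `(δ, M)`-likelihood booster for `D0, D1`. -/
def LBooster {α β : Type} [Fintype α] {n : ℕ}
    (D0 D1 : (Fin n → α) → ℝ) (δ M : ℝ) (T : DTree α (Fin n) β) : Prop :=
  1 - δ ≤ prS D1 {x | M ≤ LR D0 D1 (T.reach x)}

/-- `T` is a `(δ, M)`-overall likelihood booster for `D0^k, D1^k`. -/
def OBooster {α β : Type} [Fintype α] {n k : ℕ}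
    (D0 D1 : (Fin n → α) → ℝ) (δ M : ℝ) (T : DTree α (Fin k × Fin n) β) : Prop :=
  1 - δ ≤ prS (prodD D1) {x | M ≤ ∏ j, LR D0 D1 (T.reachJ x j)}

open scoped Classical in
/-- `T` is a `(δ, ε, M)`-uniform likelihood booster for `D0^k, D1^k`. -/
def UBooster {α β : Type} [Fintype α] {n k : ℕ}
    (D0 D1 : (Fin n → α) → ℝ) (δ ε M : ℝ) (T : DTree α (Fin k × Fin n) β) : Prop :=
  1 - δ ≤ prS (prodD D1)
    {x | (1 - ε) * k ≤ ((Finset.univ.filter fun j => M ≤ LR D0 D1 (T.reachJ x j)).card : ℝ)}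

/-- `D = ½D0 + ½D1` is a balanced input distribution for the partial function `f`:
`D_b` is a distribution supported on `f⁻¹(b)`. -/
def BalancedDist {n : ℕ} (f : (Fin n → Bool) → Option Bool) (D0 D1 : (Fin n → Bool) → ℝ) : Prop :=
  IsDist D0 ∧ IsDist D1 ∧ (∀ x, D0 x ≠ 0 → f x = some false) ∧ ∀ x, D1 x ≠ 0 → f x = some true

/-- `corr_ε(f, D)`: the minimum over `k ≥ 1` of the least depth of a deterministic decision
tree on `k` samples which, for a uniformly random `b`, on input drawn from `D_b^k`
outputs `b` with probability at least `1 - ε`. -/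
noncomputable def corrC {n : ℕ} (ε : ℝ) (D0 D1 : (Fin n → Bool) → ℝ) : ℕ :=
  sInf {q | ∃ k, 0 < k ∧ ∃ T : DTree Bool (Fin k × Fin n) Bool, T.depth ≤ q ∧
    1 - ε ≤ (prS (prodD D0) {x | T.eval x = false} + prS (prodD D1) {x | T.eval x = true}) / 2}

/-- `sel_ε(f, D)`: the minimum over `k ≥ 1` of the least depth of a deterministic decision
tree on `k` samples from `D` outputting a pair `(i, f(xⁱ))` with probability at least `1 - ε`. -/
noncomputable def selC {n : ℕ} (ε : ℝ) (f : (Fin n → Bool) → Option Bool)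
    (D : (Fin n → Bool) → ℝ) : ℕ :=
  sInf {q | ∃ k, 0 < k ∧ ∃ T : DTree Bool (Fin k × Fin n) (Fin k × Bool), T.depth ≤ q ∧
    1 - ε ≤ prS (prodD D) {x | f (fun i => x ((T.eval x).1, i)) = some (T.eval x).2}}

/-- The product distribution `D_{ab}^k = (Da × Db)^k` on `k` pairs of samples. -/
noncomputable def prodD2 {n k : ℕ} (Da Db : (Fin n → Bool) → ℝ) :
    ((Fin k × Fin 2 × Fin n) → Bool) → ℝ :=
  fun x => ∏ j, (Da fun i => x (j, 0, i)) * Db fun i => x (j, 1, i)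

/-- `bicorr_ε(f, D)`: minimum over `k ≥ 1` of the least depth of a deterministic decision tree
that distinguishes `D_{01}^k` (output `false`) from `D_{10}^k` (output `true`) with
probability at least `1 - ε` for a uniformly random choice between the two. -/
noncomputable def bicorrC {n : ℕ} (ε : ℝ) (D0 D1 : (Fin n → Bool) → ℝ) : ℕ :=
  sInf {q | ∃ k, 0 < k ∧ ∃ T : DTree Bool (Fin k × Fin 2 × Fin n) Bool, T.depth ≤ q ∧
    1 - ε ≤ (prS (prodD2 D0 D1) {x | T.eval x = false} +
             prS (prodD2 D1 D0) {x | T.eval x = true}) / 2}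

/-- `R_ε(f)`: randomized query complexity, i.e. the least `q` such that some probability
distribution over deterministic decision trees of depth at most `q` outputs `f x`
with probability at least `1 - ε` for every `x` in the domain of `f`. -/
noncomputable def Rq {ι : Type} (ε : ℝ) (f : (ι → Bool) → Option Bool) : ℕ :=
  sInf {q | ∃ (p : ℕ → ℝ) (Ts : ℕ → DTree Bool ι Bool),
    (∀ i, 0 ≤ p i) ∧ (∑' i, p i) = 1 ∧ (∀ i, (Ts i).depth ≤ q) ∧
    ∀ x b, f x = some b → 1 - ε ≤ ∑' i, if (Ts i).eval x = b then p i else 0}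

/-- `corr_ε(f)`: the maximum of `corr_ε(f, D)` over balanced input distributions `D` for `f`. -/
noncomputable def corrMax {n : ℕ} (ε : ℝ) (f : (Fin n → Bool) → Option Bool) : ℕ :=
  sSup {q | ∃ D0 D1, BalancedDist f D0 D1 ∧ q = corrC ε D0 D1}

/-- `sel_ε(f)`: the maximum of `sel_ε(f, D)` over balanced input distributions `D` for `f`. -/
noncomputable def selMax {n : ℕ} (ε : ℝ) (f : (Fin n → Bool) → Option Bool) : ℕ :=
  sSup {q | ∃ D0 D1, BalancedDist f D0 D1 ∧ q = selC ε f fun x => (D0 x + D1 x) / 2}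
/-- The parity (XOR) of all bits of `x`. -/
def XORn {n : ℕ} (x : Fin n → Bool) : Bool :=
  decide ((Finset.univ.filter fun i => x i = true).card % 2 = 1)

/-- The parity of the bits of `x` in positions `≥ 2`. -/
def XORtail {n : ℕ} (x : Fin n → Bool) : Bool :=
  decide ((Finset.univ.filter fun i : Fin n => 2 ≤ (i : ℕ) ∧ x i = true).card % 2 = 1)

/-- `x` with the bits in block `B` flipped. -/
def flipB {n : ℕ} (x : Fin n → Bool) (B : Finset (Fin n)) : Fin n → Bool :=
  fun i => if i ∈ B then !(x i) else x i

/-- `B` is a sensitive block of `f` on `x`: `x^B` lies in the domain of `f` and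
`f(x^B) ≠ f(x)`. -/
def SensBlock {n : ℕ} (f : (Fin n → Bool) → Option Bool) (x : Fin n → Bool)
    (B : Finset (Fin n)) : Prop :=
  (f (flipB x B)).isSome ∧ f (flipB x B) ≠ f x

/-- Fractional block sensitivity `fbs(f) = max_x fbs(f, x)`, where `fbs(f,x)` is the value
of the fractional packing LP over the sensitive blocks of `x`. -/
noncomputable def fbs {n : ℕ} (f : (Fin n → Bool) → Option Bool) : ℝ :=
  sSup {r | ∃ x, (f x).isSome ∧ ∃ w : Finset (Fin n) → ℝ,
    (∀ B, 0 ≤ w B) ∧ (∀ B, w B ≤ 1) ∧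
    (∀ B, w B ≠ 0 → SensBlock f x B) ∧
    (∀ i, ∑ B ∈ Finset.univ.filter (fun B => i ∈ B), w B ≤ 1) ∧
    r = ∑ B, w B}

/-- The composed partial function `f ∘ g`, defined on `(x¹, …, xⁿ)` when every `xⁱ` is in
the domain of `g`, with value `f(g(x¹), …, g(xⁿ))`. -/
def compFG {n m : ℕ} (f : (Fin n → Bool) → Option Bool) (g : (Fin m → Bool) → Option Bool) :
    ((Fin n × Fin m) → Bool) → Option Bool :=
  fun x =>
    if h : ∀ i, (g fun s => x (i, s)).isSome then
      f fun i => (g fun s => x (i, s)).get (h i)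
    else none

/-- Number of queries that `T` makes into block `B` on input `x` (each query reads one bit
`(i, s)`, and counts if `i ∈ B`). -/
def countQ {m n : ℕ} {β : Type} (B : Finset (Fin n)) :
    DTree Bool (Fin n × Fin m) β → ((Fin n × Fin m) → Bool) → ℕ
  | .leaf _, _ => 0
  | .node p ch, x => (if p.1 ∈ B then 1 else 0) + countQ B (ch (x p)) x

/-- The Shaltiel distribution for `XOR_n`, `n = m + 2`: with probability 99/100 output `0`
followed by `n-1` uniform bits; with probability 1/100 output `1`, one uniform bit, `0^{n-2}`. -/
noncomputable def D16 (m : ℕ) : (Fin (m + 2) → Bool) → ℝ := fun x =>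
  (if x 0 = false then (99 / 100) * ((1:ℝ) / 2) ^ (m + 1) else 0) +
  (if x 0 = true ∧ (∀ i : Fin (m + 2), 2 ≤ (i : ℕ) → x i = false) then 1 / 200 else 0)

/-- The distribution of Theorem 2 for `XOR_n`, `n = m + 3`: sample `z` uniform on `n-2` bits,
`a := XOR(z)`, `b` uniform; output `a a z` w.p. 1/100 and `b b z` w.p. 99/100. -/
noncomputable def D34 (m : ℕ) : (Fin (m + 3) → Bool) → ℝ := fun x =>
  if x 0 = x 1 then
    ((1:ℝ) / 2) ^ (m + 1) * (99 / 200 + if x 0 = XORtail x then 1 / 100 else 0)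
  else 0

/-- A distribution conditioned on `XORn x = b` (for distributions giving each value
probability 1/2). -/
noncomputable def condXOR {n : ℕ} (D : (Fin n → Bool) → ℝ) (b : Bool) : (Fin n → Bool) → ℝ :=
  fun x => if XORn x = b then 2 * D x else 0


section CorrErrAux

open DTree

namespace CorrErr

variable {α ι ι' β γ' : Type}

/-- Graft: replace each leaf `b` of `t` by the tree `f b`. -/
def graft : DTree α ι β → (β → DTree α ι γ') → DTree α ι γ'
  | .leaf b, f => f b
  | .node i ch, f => .node i fun a => graft (ch a) f

theorem eval_graft (t : DTree α ι β) (f : β → DTree α ι γ') (x : ι → α) :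
    (graft t f).eval x = (f (t.eval x)).eval x := by
  induction t with
  | leaf b => rfl
  | node i ch ih => simp only [graft, DTree.eval]; exact ih _

theorem depth_graft_le [Fintype α] (t : DTree α ι β) (f : β → DTree α ι γ') (Dm : ℕ)
    (hf : ∀ b, (f b).depth ≤ Dm) : (graft t f).depth ≤ t.depth + Dm := by
  induction t with
  | leaf b => simpa [graft, DTree.depth] using hf b
  | node i ch ih =>
    have h : (Finset.univ.sup fun a => (graft (ch a) f).depth)
        ≤ (Finset.univ.sup fun a => (ch a).depth) + Dm := by
      apply Finset.sup_le
      intro a _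
      exact le_trans (ih a) (add_le_add_left (Finset.le_sup (f := fun a => (ch a).depth) (Finset.mem_univ a)) Dm)
    simp only [graft, DTree.depth]
    omega

/-- Relabel the query positions of a tree. -/
def mapIdx (g : ι → ι') : DTree α ι β → DTree α ι' β
  | .leaf b => .leaf b
  | .node i ch => .node (g i) fun a => mapIdx g (ch a)

theorem eval_mapIdx (g : ι → ι') (t : DTree α ι β) (x : ι' → α) :
    (mapIdx g t).eval x = t.eval fun i => x (g i) := by
  induction t with
  | leaf b => rfl
  | node i ch ih => simp only [mapIdx, DTree.eval]; exact ih _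

theorem depth_mapIdx [Fintype α] (g : ι → ι') (t : DTree α ι β) :
    (mapIdx g t).depth = t.depth := by
  induction t with
  | leaf b => rfl
  | node i ch ih => simp only [mapIdx, DTree.depth, ih]

/-- The tree reading the positions in `L` of the (single) sample and outputting `R`
of the resulting string (off-`L` positions taken from `σ`). -/
def readL {n : ℕ} (R : (Fin n → Bool) → Bool) :
    List (Fin n) → (Fin n → Bool) → DTree Bool (Fin 1 × Fin n) Bool
  | [], σ => .leaf (R σ)
  | i :: L, σ => .node (0, i) fun a => readL R L (Function.update σ i a)

theorem eval_readL {n : ℕ} (R : (Fin n → Bool) → Bool) (L : List (Fin n))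
    (σ : Fin n → Bool) (x : Fin 1 × Fin n → Bool) :
    (readL R L σ).eval x = R fun i => if i ∈ L then x (0, i) else σ i := by
  classical
  induction L generalizing σ with
  | nil => simp [readL, DTree.eval]
  | cons i L ih =>
    simp only [readL, DTree.eval, ih]
    congr 1
    funext t
    by_cases h1 : t ∈ L <;> by_cases h2 : t = i <;>
      simp [h1, h2, Function.update_apply, List.mem_cons]

theorem depth_readL {n : ℕ} (R : (Fin n → Bool) → Bool) (L : List (Fin n))
    (σ : Fin n → Bool) : (readL R L σ).depth ≤ L.length := by
  induction L generalizing σ with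
  | nil => simp [readL, DTree.depth]
  | cons i L ih =>
    simp only [readL, DTree.depth, List.length_cons]
    have : (Finset.univ.sup fun a => (readL R L (Function.update σ i a)).depth) ≤ L.length :=
      Finset.sup_le fun a _ => ih _
    omega

/-- The amplification tree: run `T` on the blocks listed in `L`, keep a running count `c`
of `true` answers, and output whether the final count is at least `tthr`. -/
def ampL {n k m : ℕ} (T : DTree Bool (Fin k × Fin n) Bool) (tthr : ℕ) :
    List (Fin m) → ℕ → DTree Bool ((Fin m × Fin k) × Fin n) Bool
  | [], c => .leaf (decide (tthr ≤ c))
  | r :: L, c =>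
      graft (mapIdx (fun q => ((r, q.1), q.2)) T) fun b => ampL T tthr L (c + cond b 1 0)

theorem eval_ampL {n k m : ℕ} (T : DTree Bool (Fin k × Fin n) Bool) (tthr : ℕ)
    (L : List (Fin m)) (c : ℕ) (x : (Fin m × Fin k) × Fin n → Bool) :
    (ampL T tthr L c).eval x =
      decide (tthr ≤ c + (L.map fun r => cond (T.eval fun q => x ((r, q.1), q.2)) 1 0).sum) := by
  induction L generalizing c with
  | nil => simp [ampL, DTree.eval]
  | cons r L ih =>
    rw [ampL, eval_graft, ih, eval_mapIdx]
    simp [add_assoc]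

theorem depth_ampL {n k m : ℕ} (T : DTree Bool (Fin k × Fin n) Bool) (tthr : ℕ)
    (L : List (Fin m)) (c : ℕ) : (ampL T tthr L c).depth ≤ L.length * T.depth := by
  induction L generalizing c with
  | nil => simp [ampL, DTree.depth]
  | cons r L ih =>
    refine le_trans (depth_graft_le _ _ (L.length * T.depth) fun b => ih _) ?_
    rw [depth_mapIdx, List.length_cons, Nat.succ_mul]
    omega

theorem sum_pi_prod {σ : Type} [Fintype σ] (m : ℕ) (f : σ → ℝ) :
    ∑ Y : Fin m → σ, ∏ r, f (Y r) = (∑ z, f z) ^ m := by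
  classical
  rw [show (∑ Y : Fin m → σ, ∏ r, f (Y r))
      = ∑ Y ∈ Fintype.piFinset (fun _ : Fin m => (Finset.univ : Finset σ)), ∏ r, f (Y r) by
    rw [Fintype.piFinset_univ]]
  rw [← Finset.prod_univ_sum]
  simp [Finset.prod_const]

theorem prS_setOf {γ : Type} [Fintype γ] (D : γ → ℝ) (P : γ → Prop) [DecidablePred P] :
    prS D {x | P x} = ∑ x, if P x then D x else 0 := by
  unfold prS
  refine Finset.sum_congr rfl fun x _ => ?_
  by_cases h : P x <;> simp [Set.indicator_apply, Set.mem_setOf_eq, h]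

theorem prS_one {γ : Type} [Fintype γ] (D : γ → ℝ) (S : Set γ)
    (h : ∀ x, D x ≠ 0 → x ∈ S) (hsum : ∑ x, D x = 1) : prS D S = 1 := by
  classical
  unfold prS
  rw [← hsum]
  refine Finset.sum_congr rfl fun x _ => ?_
  by_cases hx : x ∈ S
  · simp [Set.indicator_apply, hx]
  · have : D x = 0 := by by_contra hD; exact hx (h x hD)
    simp [Set.indicator_apply, hx, this]

theorem prS_bool {γ : Type} [Fintype γ] (D : γ → ℝ) (hsum : ∑ x, D x = 1) (g : γ → Bool) :
    prS D {x | g x = false} = 1 - prS D {x | g x = true} := by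
  classical
  have h : prS D {x | g x = false} + prS D {x | g x = true} = 1 := by
    unfold prS
    rw [← Finset.sum_add_distrib, ← hsum]
    refine Finset.sum_congr rfl fun x _ => ?_
    cases hg : g x <;> simp [Set.indicator_apply, Set.mem_setOf_eq, hg]
  linarith

theorem sum_prodD_one {n K : ℕ} (D : (Fin n → Bool) → ℝ) (hsum : ∑ z, D z = 1) :
    ∑ x : (Fin K × Fin n) → Bool, prodD D x = 1 := by
  rw [← Equiv.sum_comp (Equiv.curry (Fin K) (Fin n) Bool).symm (prodD D)]
  rw [show (∑ Y : Fin K → Fin n → Bool, prodD D ((Equiv.curry (Fin K) (Fin n) Bool).symm Y))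
      = ∑ Y : Fin K → Fin n → Bool, ∏ j, D (Y j) from rfl]
  rw [sum_pi_prod, hsum, one_pow]

theorem prodD_nonneg {n K : ℕ} (D : (Fin n → Bool) → ℝ) (hnn : ∀ z, 0 ≤ D z)
    (x : (Fin K × Fin n) → Bool) : 0 ≤ prodD D x :=
  Finset.prod_nonneg fun _ _ => hnn _

/-- Splitting a `(Fin (m*k) × Fin n)`-indexed input into `m` blocks of `k` samples. -/
def bigEquiv (m k n : ℕ) : ((Fin (m * k) × Fin n) → Bool) ≃ (Fin m → ((Fin k × Fin n) → Bool)) where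
  toFun x := fun r q => x (finProdFinEquiv (r, q.1), q.2)
  invFun Y := fun p => Y (finProdFinEquiv.symm p.1).1 ((finProdFinEquiv.symm p.1).2, p.2)
  left_inv x := by
    funext p
    cases p with
    | mk q i =>
      show x (finProdFinEquiv ((finProdFinEquiv.symm q).1, (finProdFinEquiv.symm q).2), i) = x (q, i)
      rw [Prod.mk.eta, Equiv.apply_symm_apply]
  right_inv Y := by
    funext r q
    cases q with
    | mk j i => simp

theorem prodD_big {m k n : ℕ} (D : (Fin n → Bool) → ℝ) (x : (Fin (m * k) × Fin n) → Bool) :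
    prodD D x = ∏ r : Fin m, prodD D (bigEquiv m k n x r) := by
  show (∏ q : Fin (m * k), D fun i => x (q, i)) = _
  rw [← Equiv.prod_comp finProdFinEquiv (fun q => D fun i => x (q, i)), Fintype.prod_prod_type]
  rfl

theorem exp_le_quad {x : ℝ} (hx : |x| ≤ 1) : Real.exp x ≤ 1 + x + x ^ 2 := by
  have h := Real.exp_bound hx (n := 2) (by norm_num)
  have h2 : ∑ m ∈ Finset.range 2, x ^ m / m.factorial = 1 + x := by
    simp [Finset.sum_range_succ]
  rw [h2] at h
  have h3 := (abs_le.1 h).2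
  rw [sq_abs] at h3
  norm_num [Nat.factorial] at h3
  nlinarith [sq_nonneg x]

theorem one_add_le_exp_quad {t p : ℝ} (ht : |t| ≤ 1) (hp0 : 0 ≤ p) (hp1 : p ≤ 1) :
    0 ≤ 1 + (Real.exp t - 1) * p ∧ 1 + (Real.exp t - 1) * p ≤ Real.exp (t * p + t ^ 2) := by
  have hq := exp_le_quad ht
  constructor
  · nlinarith [Real.exp_pos t, mul_nonneg (Real.exp_pos t).le hp0]
  · have h1 : (Real.exp t - 1) * p ≤ (t + t ^ 2) * p :=
      mul_le_mul_of_nonneg_right (by nlinarith) hp0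
    have h2 : (t + t ^ 2) * p ≤ t * p + t ^ 2 := by nlinarith [sq_nonneg t]
    have h3 := Real.add_one_le_exp (t * p + t ^ 2)
    linarith

/-- Exact MGF of the number of `true` answers over `m` independent blocks. -/
theorem mgf_eq {n k m : ℕ} (T : DTree Bool (Fin k × Fin n) Bool) (Dd : (Fin n → Bool) → ℝ)
    (hsum : ∑ z : (Fin k × Fin n) → Bool, prodD Dd z = 1) (t : ℝ) :
    ∑ Y : Fin m → ((Fin k × Fin n) → Bool),
        (∏ r, prodD Dd (Y r)) *
          Real.exp (t * ((∑ r : Fin m, cond (T.eval (Y r)) 1 0 : ℕ) : ℝ))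
      = (1 + (Real.exp t - 1) * prS (prodD Dd) {z | T.eval z = true}) ^ m := by
  classical
  have hstep : ∀ Y : Fin m → ((Fin k × Fin n) → Bool),
      (∏ r, prodD Dd (Y r)) *
          Real.exp (t * ((∑ r : Fin m, cond (T.eval (Y r)) 1 0 : ℕ) : ℝ))
        = ∏ r, (prodD Dd (Y r) *
            Real.exp (t * ((cond (T.eval (Y r)) 1 0 : ℕ) : ℝ))) := by
    intro Y
    rw [Finset.prod_mul_distrib, ← Real.exp_sum]
    congr 2
    push_cast
    rw [Finset.mul_sum]
  rw [Finset.sum_congr rfl fun Y _ => hstep Y]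
  rw [show (∑ Y : Fin m → ((Fin k × Fin n) → Bool),
        ∏ r, (prodD Dd (Y r) * Real.exp (t * ((cond (T.eval (Y r)) 1 0 : ℕ) : ℝ))))
      = (∑ z : (Fin k × Fin n) → Bool,
          prodD Dd z * Real.exp (t * ((cond (T.eval z) 1 0 : ℕ) : ℝ))) ^ m from
    sum_pi_prod m (fun z => prodD Dd z * Real.exp (t * ((cond (T.eval z) 1 0 : ℕ) : ℝ)))]
  congr 1
  have hsplit : ∀ z : (Fin k × Fin n) → Bool,
      prodD Dd z * Real.exp (t * ((cond (T.eval z) 1 0 : ℕ) : ℝ))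
        = prodD Dd z + (Real.exp t - 1) * (if T.eval z = true then prodD Dd z else 0) := by
    intro z
    cases hz : T.eval z <;> simp [hz] <;> ring
  rw [Finset.sum_congr rfl fun z _ => hsplit z, Finset.sum_add_distrib, hsum,
    ← Finset.mul_sum, prS_setOf]


theorem prS_true_nonneg {n k : ℕ} (T : DTree Bool (Fin k × Fin n) Bool)
    (Dd : (Fin n → Bool) → ℝ) (hnn : ∀ z, 0 ≤ Dd z) :
    0 ≤ prS (prodD Dd) {z : (Fin k × Fin n) → Bool | T.eval z = true} := by
  rw [prS_setOf]
  refine Finset.sum_nonneg fun z _ => ?_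
  split
  exacts [prodD_nonneg Dd hnn z, le_rfl]

theorem prS_true_le_one {n k : ℕ} (T : DTree Bool (Fin k × Fin n) Bool)
    (Dd : (Fin n → Bool) → ℝ) (hnn : ∀ z, 0 ≤ Dd z) (hsum : ∑ z, Dd z = 1) :
    prS (prodD Dd) {z : (Fin k × Fin n) → Bool | T.eval z = true} ≤ 1 := by
  rw [prS_setOf, ← sum_prodD_one Dd hsum]
  refine Finset.sum_le_sum fun z _ => ?_
  split
  exacts [le_rfl, prodD_nonneg Dd hnn z]

/-- Chernoff-type upper tail bound for the count of `true` answers over `m` blocks. -/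
theorem tail_le {n k m : ℕ} (T : DTree Bool (Fin k × Fin n) Bool) (Dd : (Fin n → Bool) → ℝ)
    (hnn : ∀ z, 0 ≤ Dd z) (hsum : ∑ z, Dd z = 1)
    (lam a : ℝ) (hlam0 : 0 ≤ lam) (hlam1 : |lam| ≤ 1) (tthr : ℕ) (ha : a ≤ (tthr : ℝ)) :
    (∑ Y : Fin m → ((Fin k × Fin n) → Bool),
        if tthr ≤ ∑ r : Fin m, (cond (T.eval (Y r)) 1 0 : ℕ) then ∏ r, prodD Dd (Y r) else 0)
      ≤ Real.exp (-(lam * a) +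
          (lam * prS (prodD Dd) {z : (Fin k × Fin n) → Bool | T.eval z = true} + lam ^ 2) * m) := by
  classical
  have hwsum : ∑ z : (Fin k × Fin n) → Bool, prodD Dd z = 1 := sum_prodD_one Dd hsum
  have hpnn := prS_true_nonneg T Dd hnn
  have hple := prS_true_le_one T Dd hnn hsum
  calc (∑ Y : Fin m → ((Fin k × Fin n) → Bool),
        if tthr ≤ ∑ r : Fin m, (cond (T.eval (Y r)) 1 0 : ℕ) then ∏ r, prodD Dd (Y r) else 0)
      ≤ ∑ Y : Fin m → ((Fin k × Fin n) → Bool),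
          ((∏ r, prodD Dd (Y r)) *
            Real.exp (lam * ((∑ r : Fin m, cond (T.eval (Y r)) 1 0 : ℕ) : ℝ))) *
              Real.exp (-(lam * a)) := by
        refine Finset.sum_le_sum fun Y _ => ?_
        have hW : 0 ≤ ∏ r, prodD Dd (Y r) :=
          Finset.prod_nonneg fun r _ => prodD_nonneg Dd hnn _
        by_cases h : tthr ≤ ∑ r : Fin m, (cond (T.eval (Y r)) 1 0 : ℕ)
        · rw [if_pos h, mul_assoc, ← Real.exp_add]
          have h1 : a ≤ ((∑ r : Fin m, cond (T.eval (Y r)) 1 0 : ℕ) : ℝ) :=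
            le_trans ha (Nat.cast_le.mpr h)
          have hSa : 0 ≤ lam * ((∑ r : Fin m, cond (T.eval (Y r)) 1 0 : ℕ) : ℝ) + -(lam * a) := by
            nlinarith
          have h1exp : 1 ≤ Real.exp
              (lam * ((∑ r : Fin m, cond (T.eval (Y r)) 1 0 : ℕ) : ℝ) + -(lam * a)) := by
            nlinarith [Real.add_one_le_exp
              (lam * ((∑ r : Fin m, cond (T.eval (Y r)) 1 0 : ℕ) : ℝ) + -(lam * a))]
          nlinarith [mul_le_mul_of_nonneg_left h1exp hW]
        · rw [if_neg h]
          exact mul_nonneg (mul_nonneg hW (Real.exp_nonneg _)) (Real.exp_nonneg _)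
    _ = (∑ Y : Fin m → ((Fin k × Fin n) → Bool),
          (∏ r, prodD Dd (Y r)) *
            Real.exp (lam * ((∑ r : Fin m, cond (T.eval (Y r)) 1 0 : ℕ) : ℝ)))
          * Real.exp (-(lam * a)) := by rw [← Finset.sum_mul]
    _ = (1 + (Real.exp lam - 1) * prS (prodD Dd) {z : (Fin k × Fin n) → Bool | T.eval z = true}) ^ m
          * Real.exp (-(lam * a)) := by rw [mgf_eq T Dd hwsum lam]
    _ ≤ Real.exp (lam * prS (prodD Dd) {z : (Fin k × Fin n) → Bool | T.eval z = true} + lam ^ 2) ^ m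
          * Real.exp (-(lam * a)) := by
        have h := one_add_le_exp_quad (t := lam) hlam1 hpnn hple
        exact mul_le_mul_of_nonneg_right (pow_le_pow_left₀ h.1 h.2 m) (Real.exp_nonneg _)
    _ = Real.exp (-(lam * a) +
          (lam * prS (prodD Dd) {z : (Fin k × Fin n) → Bool | T.eval z = true} + lam ^ 2) * m) := by
        rw [← Real.exp_nat_mul, ← Real.exp_add]
        congr 1
        ring

/-- Chernoff-type lower tail bound. -/
theorem lowtail_le {n k m : ℕ} (T : DTree Bool (Fin k × Fin n) Bool) (Dd : (Fin n → Bool) → ℝ)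
    (hnn : ∀ z, 0 ≤ Dd z) (hsum : ∑ z, Dd z = 1)
    (lam a : ℝ) (hlam0 : 0 ≤ lam) (hlam1 : |lam| ≤ 1) (tthr : ℕ) (ha : (tthr : ℝ) ≤ a + 1) :
    (∑ Y : Fin m → ((Fin k × Fin n) → Bool),
        if tthr ≤ ∑ r : Fin m, (cond (T.eval (Y r)) 1 0 : ℕ) then 0 else ∏ r, prodD Dd (Y r))
      ≤ Real.exp (lam * a +
          (-(lam * prS (prodD Dd) {z : (Fin k × Fin n) → Bool | T.eval z = true}) + lam ^ 2) * m) := by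
  classical
  have hwsum : ∑ z : (Fin k × Fin n) → Bool, prodD Dd z = 1 := sum_prodD_one Dd hsum
  have hpnn := prS_true_nonneg T Dd hnn
  have hple := prS_true_le_one T Dd hnn hsum
  have hlamn : |(-lam)| ≤ 1 := by rwa [abs_neg]
  calc (∑ Y : Fin m → ((Fin k × Fin n) → Bool),
        if tthr ≤ ∑ r : Fin m, (cond (T.eval (Y r)) 1 0 : ℕ) then 0 else ∏ r, prodD Dd (Y r))
      ≤ ∑ Y : Fin m → ((Fin k × Fin n) → Bool),
          ((∏ r, prodD Dd (Y r)) *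
            Real.exp ((-lam) * ((∑ r : Fin m, cond (T.eval (Y r)) 1 0 : ℕ) : ℝ))) *
              Real.exp (lam * a) := by
        refine Finset.sum_le_sum fun Y _ => ?_
        have hW : 0 ≤ ∏ r, prodD Dd (Y r) :=
          Finset.prod_nonneg fun r _ => prodD_nonneg Dd hnn _
        by_cases h : tthr ≤ ∑ r : Fin m, (cond (T.eval (Y r)) 1 0 : ℕ)
        · rw [if_pos h]
          exact mul_nonneg (mul_nonneg hW (Real.exp_nonneg _)) (Real.exp_nonneg _)
        · rw [if_neg h, mul_assoc, ← Real.exp_add]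
          have h1 : ((∑ r : Fin m, cond (T.eval (Y r)) 1 0 : ℕ) : ℝ) ≤ a := by
            have h2 : (∑ r : Fin m, cond (T.eval (Y r)) 1 0 : ℕ) + 1 ≤ tthr :=
              Nat.succ_le_of_lt (Nat.lt_of_not_le h)
            have h3 : ((∑ r : Fin m, cond (T.eval (Y r)) 1 0 : ℕ) : ℝ) + 1 ≤ (tthr : ℝ) := by
              exact_mod_cast h2
            linarith
          have hSa : 0 ≤ (-lam) * ((∑ r : Fin m, cond (T.eval (Y r)) 1 0 : ℕ) : ℝ) + lam * a := by
            nlinarith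
          have h1exp : 1 ≤ Real.exp
              ((-lam) * ((∑ r : Fin m, cond (T.eval (Y r)) 1 0 : ℕ) : ℝ) + lam * a) := by
            nlinarith [Real.add_one_le_exp
              ((-lam) * ((∑ r : Fin m, cond (T.eval (Y r)) 1 0 : ℕ) : ℝ) + lam * a)]
          nlinarith [mul_le_mul_of_nonneg_left h1exp hW]
    _ = (∑ Y : Fin m → ((Fin k × Fin n) → Bool),
          (∏ r, prodD Dd (Y r)) *
            Real.exp ((-lam) * ((∑ r : Fin m, cond (T.eval (Y r)) 1 0 : ℕ) : ℝ)))
          * Real.exp (lam * a) := by rw [← Finset.sum_mul]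
    _ = (1 + (Real.exp (-lam) - 1) * prS (prodD Dd) {z : (Fin k × Fin n) → Bool | T.eval z = true}) ^ m
          * Real.exp (lam * a) := by rw [mgf_eq T Dd hwsum (-lam)]
    _ ≤ Real.exp ((-lam) * prS (prodD Dd) {z : (Fin k × Fin n) → Bool | T.eval z = true} + (-lam) ^ 2) ^ m
          * Real.exp (lam * a) := by
        have h := one_add_le_exp_quad (t := -lam) hlamn hpnn hple
        exact mul_le_mul_of_nonneg_right (pow_le_pow_left₀ h.1 h.2 m) (Real.exp_nonneg _)
    _ = Real.exp (lam * a +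
          (-(lam * prS (prodD Dd) {z : (Fin k × Fin n) → Bool | T.eval z = true}) + lam ^ 2) * m) := by
        rw [← Real.exp_nat_mul, ← Real.exp_add]
        congr 1
        ring

end CorrErr

end CorrErrAux

set_option maxHeartbeats 2000000 in
/-- Error reduction for the correlated samples problem:
`corr_ε(f,D) ≤ C · (log(1/ε)/δ²) · corr_{1/2−δ}(f,D)`. -/
theorem corr_error_reduction :
    ∃ C : ℝ, 0 < C ∧
      ∀ (n : ℕ) (f : (Fin n → Bool) → Option Bool) (D0 D1 : (Fin n → Bool) → ℝ),
        BalancedDist f D0 D1 →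
        ∀ ε δ : ℝ, 0 < ε → ε < 1/2 → 0 < δ → δ ≤ 1/2 →
          (corrC ε D0 D1 : ℝ) ≤ C * (Real.log (1/ε) / δ ^ 2) * (corrC (1/2 - δ) D0 D1 : ℝ) := by
  classical
  refine ⟨5, by norm_num, ?_⟩
  intro n f D0 D1 hBD ε δ hε hεlt hδ hδle
  obtain ⟨⟨hD0nn, hD0sum⟩, ⟨hD1nn, hD1sum⟩, hf0, hf1⟩ := hBD
  have hdisj : ∀ z, D0 z ≠ 0 → D1 z = 0 := by
    intro z h0
    by_contra h1
    have e0 := hf0 z h0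
    have e1 := hf1 z h1
    rw [e0] at e1
    exact Bool.noConfusion (Option.some.inj e1)
  -- Step 1: the defining set of `corrC (1/2 - δ)` is nonempty (read-all-bits tree).
  have hmemn : n ∈ {q | ∃ k, 0 < k ∧ ∃ T : DTree Bool (Fin k × Fin n) Bool, T.depth ≤ q ∧
      1 - (1/2 - δ) ≤ (prS (prodD D0) {x | T.eval x = false}
        + prS (prodD D1) {x | T.eval x = true}) / 2} := by
    refine ⟨1, one_pos,
      CorrErr.readL (fun z => decide (D1 z ≠ 0)) (List.finRange n) (fun _ => false), ?_, ?_⟩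
    · simpa using CorrErr.depth_readL (fun z => decide (D1 z ≠ 0)) (List.finRange n) _
    · have hev : ∀ x : Fin 1 × Fin n → Bool,
          (CorrErr.readL (fun z => decide (D1 z ≠ 0)) (List.finRange n) (fun _ => false)).eval x
            = decide (D1 (fun i => x (0, i)) ≠ 0) := by
        intro x
        rw [CorrErr.eval_readL]
        simp [List.mem_finRange]
      have hsupp0 : ∀ (x : Fin 1 × Fin n → Bool), prodD D0 x ≠ 0 → D0 (fun i => x (0, i)) ≠ 0 := by
        intro x hx h0
        apply hx
        show (∏ j : Fin 1, D0 fun i => x (j, i)) = 0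
        rw [Fin.prod_univ_one]
        exact h0
      have hsupp1 : ∀ (x : Fin 1 × Fin n → Bool), prodD D1 x ≠ 0 → D1 (fun i => x (0, i)) ≠ 0 := by
        intro x hx h0
        apply hx
        show (∏ j : Fin 1, D1 fun i => x (j, i)) = 0
        rw [Fin.prod_univ_one]
        exact h0
      have h0 : prS (prodD D0) {x : Fin 1 × Fin n → Bool |
          (CorrErr.readL (fun z => decide (D1 z ≠ 0)) (List.finRange n) (fun _ => false)).eval x
            = false} = 1 := by
        refine CorrErr.prS_one _ _ ?_ (CorrErr.sum_prodD_one D0 hD0sum)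
        intro x hx
        simp only [Set.mem_setOf_eq]
        rw [hev x]
        simp [hdisj _ (hsupp0 x hx)]
      have h1 : prS (prodD D1) {x : Fin 1 × Fin n → Bool |
          (CorrErr.readL (fun z => decide (D1 z ≠ 0)) (List.finRange n) (fun _ => false)).eval x
            = true} = 1 := by
        refine CorrErr.prS_one _ _ ?_ (CorrErr.sum_prodD_one D1 hD1sum)
        intro x hx
        simp only [Set.mem_setOf_eq]
        rw [hev x]
        simp [hsupp1 x hx]
      rw [h0, h1]
      linarith
  -- Step 2: extract an optimal tree for error 1/2 - δ.
  obtain ⟨k, hk, T, hTdep, hTsucc⟩ : ∃ k, 0 < k ∧ ∃ T : DTree Bool (Fin k × Fin n) Bool,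
      T.depth ≤ corrC (1/2 - δ) D0 D1 ∧
      1 - (1/2 - δ) ≤ (prS (prodD D0) {x | T.eval x = false}
        + prS (prodD D1) {x | T.eval x = true}) / 2 := Nat.sInf_mem ⟨n, hmemn⟩
  set d := corrC (1/2 - δ) D0 D1 with hd
  set p0 := prS (prodD D0) {z : (Fin k × Fin n) → Bool | T.eval z = true} with hp0def
  set p1 := prS (prodD D1) {z : (Fin k × Fin n) → Bool | T.eval z = true} with hp1def
  have hw0sum : ∑ z : (Fin k × Fin n) → Bool, prodD D0 z = 1 := CorrErr.sum_prodD_one D0 hD0sum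
  have hw1sum : ∑ z : (Fin k × Fin n) → Bool, prodD D1 z = 1 := CorrErr.sum_prodD_one D1 hD1sum
  have hp0nn : 0 ≤ p0 := CorrErr.prS_true_nonneg T D0 hD0nn
  have hp1le : p1 ≤ 1 := CorrErr.prS_true_le_one T D1 hD1nn hD1sum
  have hfalse0 : prS (prodD D0) {z : (Fin k × Fin n) → Bool | T.eval z = false} = 1 - p0 :=
    CorrErr.prS_bool (prodD D0) hw0sum (fun z => T.eval z)
  have hgap : 2 * δ ≤ p1 - p0 := by
    rw [hfalse0] at hTsucc
    linarith
  clear_value d p0 p1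
  -- Step 3: parameters.
  have hδ2 : (0:ℝ) < δ ^ 2 := by positivity
  set L := Real.log (1/ε) with hL
  have hLpos : 0 < L := by
    rw [hL]
    apply Real.log_pos
    rw [lt_div_iff₀ hε]
    linarith
  set lam := δ / 2 with hlam
  have hlam0 : 0 ≤ lam := by rw [hlam]; linarith
  have habs : |lam| ≤ 1 := by
    rw [abs_of_nonneg hlam0, hlam]
    linarith
  set m := ⌈4 / δ ^ 2 * L⌉₊ with hm
  have hm0 : 0 < m := Nat.ceil_pos.mpr (by positivity)
  have hmge : 4 / δ ^ 2 * L ≤ (m : ℝ) := Nat.le_ceil _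
  have hmlt : (m : ℝ) < 4 / δ ^ 2 * L + 1 := Nat.ceil_lt_add_one (by positivity)
  set θ := (p0 + p1) / 2 with hθ
  have hθnn : 0 ≤ θ := by
    rw [hθ]
    have := CorrErr.prS_true_nonneg T D1 hD1nn
    linarith
  have hθmnn : 0 ≤ θ * m := mul_nonneg hθnn (Nat.cast_nonneg m)
  set tthr := ⌈θ * m⌉₊ with htthr
  have htle : θ * m ≤ (tthr : ℝ) := Nat.le_ceil _
  have htlt : (tthr : ℝ) ≤ θ * m + 1 := le_of_lt (Nat.ceil_lt_add_one hθmnn)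
  clear_value L lam m θ tthr
  -- Step 4: the amplified tree.
  set Tfin : DTree Bool (Fin (m * k) × Fin n) Bool :=
    CorrErr.mapIdx (fun p => (finProdFinEquiv p.1, p.2))
      (CorrErr.ampL T tthr (List.finRange m) 0) with hTfin
  have hdep : Tfin.depth ≤ m * d := by
    rw [hTfin, CorrErr.depth_mapIdx]
    refine le_trans (CorrErr.depth_ampL T tthr (List.finRange m) 0) ?_
    rw [List.length_finRange]
    exact Nat.mul_le_mul_left m hTdep
  have heval : ∀ x : (Fin (m * k) × Fin n) → Bool,
      Tfin.eval x = decide (tthr ≤ ∑ r : Fin m,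
        (cond (T.eval (CorrErr.bigEquiv m k n x r)) 1 0 : ℕ)) := by
    intro x
    rw [hTfin]
    simp only [CorrErr.eval_mapIdx, CorrErr.eval_ampL]
    have hAB : (∑ r : Fin m, (cond (T.eval (CorrErr.bigEquiv m k n x r)) 1 0 : ℕ))
        = ((List.finRange m).map fun r =>
            cond (T.eval fun q => x (finProdFinEquiv (r, q.1), q.2)) 1 0).sum := by
      rw [Fin.sum_univ_def]
      rfl
    rw [hAB, Nat.zero_add]
  -- Step 5: the probability of outputting `true` as a sum over blocks.
  have hchain : ∀ Dd : (Fin n → Bool) → ℝ,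
      prS (prodD Dd) {x : (Fin (m * k) × Fin n) → Bool | Tfin.eval x = true}
        = ∑ Y : Fin m → ((Fin k × Fin n) → Bool),
            if tthr ≤ ∑ r : Fin m, (cond (T.eval (Y r)) 1 0 : ℕ)
            then ∏ r, prodD Dd (Y r) else 0 := by
    intro Dd
    rw [CorrErr.prS_setOf]
    rw [← Equiv.sum_comp (CorrErr.bigEquiv m k n).symm
      (fun x => if Tfin.eval x = true then prodD Dd x else 0)]
    refine Finset.sum_congr rfl fun Y _ => ?_
    rw [heval ((CorrErr.bigEquiv m k n).symm Y),
      CorrErr.prodD_big Dd ((CorrErr.bigEquiv m k n).symm Y), Equiv.apply_symm_apply]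
    simp only [decide_eq_true_eq]
  clear_value Tfin
  -- Step 6: error bound under D0.
  have hexp_le : ∀ u : ℝ, u ≤ Real.log ε → Real.exp u ≤ ε := by
    intro u hu
    calc Real.exp u ≤ Real.exp (Real.log ε) := Real.exp_le_exp.mpr hu
    _ = ε := Real.exp_log hε
  have hlogε : -L = Real.log ε := by
    rw [hL, one_div, Real.log_inv]
    ring
  have hmain : -(δ ^ 2 / 4) * m ≤ Real.log ε := by
    have h2 : L ≤ δ ^ 2 / 4 * m := by
      have hc : L = δ ^ 2 / 4 * (4 / δ ^ 2 * L) := by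
        field_simp
      rw [hc]
      nlinarith [hδ2, hmge]
    linarith
  have herr0 : prS (prodD D0) {x : (Fin (m * k) × Fin n) → Bool | Tfin.eval x = true} ≤ ε := by
    rw [hchain D0]
    refine le_trans (CorrErr.tail_le T D0 hD0nn hD0sum lam (θ * m) hlam0 habs tthr htle) ?_
    apply hexp_le
    rw [← hp0def]
    have hx : -(lam * (θ * m)) + (lam * p0 + lam ^ 2) * m ≤ -(δ ^ 2 / 4) * m := by
      have hc : lam * p0 - lam * θ + lam ^ 2 ≤ -(δ ^ 2 / 4) := by
        rw [hlam, hθ]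
        nlinarith
      nlinarith [Nat.cast_nonneg (α := ℝ) m]
    linarith [hmain]
  -- Step 7: error bound under D1.
  have hY1sum : ∑ Y : Fin m → ((Fin k × Fin n) → Bool), ∏ r, prodD D1 (Y r) = 1 := by
    rw [show (∑ Y : Fin m → ((Fin k × Fin n) → Bool), ∏ r, prodD D1 (Y r))
        = (∑ z : (Fin k × Fin n) → Bool, prodD D1 z) ^ m from
      CorrErr.sum_pi_prod m (fun z => prodD D1 z), hw1sum, one_pow]
  have herr1 : 1 - prS (prodD D1) {x : (Fin (m * k) × Fin n) → Bool | Tfin.eval x = true} ≤ ε := by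
    have hrw : 1 - prS (prodD D1) {x : (Fin (m * k) × Fin n) → Bool | Tfin.eval x = true}
        = ∑ Y : Fin m → ((Fin k × Fin n) → Bool),
            if tthr ≤ ∑ r : Fin m, (cond (T.eval (Y r)) 1 0 : ℕ)
            then 0 else ∏ r, prodD D1 (Y r) := by
      rw [hchain D1, ← hY1sum, ← Finset.sum_sub_distrib]
      refine Finset.sum_congr rfl fun Y _ => ?_
      by_cases h : tthr ≤ ∑ r : Fin m, (cond (T.eval (Y r)) 1 0 : ℕ) <;> simp [h]
    rw [hrw]
    refine le_trans (CorrErr.lowtail_le T D1 hD1nn hD1sum lam (θ * m) hlam0 habs tthr htlt) ?_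
    apply hexp_le
    rw [← hp1def]
    have hx : lam * (θ * m) + (-(lam * p1) + lam ^ 2) * m ≤ -(δ ^ 2 / 4) * m := by
      have hc : lam * θ - lam * p1 + lam ^ 2 ≤ -(δ ^ 2 / 4) := by
        rw [hlam, hθ]
        nlinarith
      nlinarith [Nat.cast_nonneg (α := ℝ) m]
    linarith [hmain]
  -- Step 8: success probability of the amplified tree.
  have hs0 : prS (prodD D0) {x : (Fin (m * k) × Fin n) → Bool | Tfin.eval x = false}
      = 1 - prS (prodD D0) {x : (Fin (m * k) × Fin n) → Bool | Tfin.eval x = true} :=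
    CorrErr.prS_bool (prodD D0) (CorrErr.sum_prodD_one D0 hD0sum) (fun x => Tfin.eval x)
  have hsucc : 1 - ε ≤ (prS (prodD D0) {x : (Fin (m * k) × Fin n) → Bool | Tfin.eval x = false}
      + prS (prodD D1) {x : (Fin (m * k) × Fin n) → Bool | Tfin.eval x = true}) / 2 := by
    rw [hs0]
    linarith
  -- Step 9: conclude.
  have hcorr : corrC ε D0 D1 ≤ m * d :=
    Nat.sInf_le ⟨m * k, Nat.mul_pos hm0 hk, Tfin, hdep, hsucc⟩
  have h2L : Real.log 2 ≤ L := by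
    rw [hL]
    apply Real.log_le_log (by norm_num)
    rw [le_div_iff₀ hε]
    linarith
  have hlog2 : (1/4 : ℝ) < Real.log 2 := lt_trans (by norm_num) Real.log_two_gt_d9
  have h1le : (1:ℝ) ≤ L / δ ^ 2 := by
    rw [le_div_iff₀ hδ2]
    nlinarith
  have hdnn : (0:ℝ) ≤ (d : ℝ) := Nat.cast_nonneg d
  calc ((corrC ε D0 D1 : ℕ) : ℝ) ≤ ((m * d : ℕ) : ℝ) := Nat.cast_le.mpr hcorr
  _ = (m : ℝ) * (d : ℝ) := by push_cast; ring
  _ ≤ (5 * (L / δ ^ 2)) * (d : ℝ) := by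
      refine mul_le_mul_of_nonneg_right ?_ hdnn
      have h4 : 4 / δ ^ 2 * L = 4 * (L / δ ^ 2) := by ring
      linarith [hmlt, h1le]
end

section
/- There is a universal constant C > 0 such that for every partial boolean function f : {0,1}^n → {0,1,*} and every balanced input distribution D = ½D0 + ½D1 for f: corr_{1/3}(f,D) ≤ C · sel_{1/3}(f,D). -/
open Finset

-- ==== my development starts here ====
open scoped Classical

namespace CorrSelProof

variable {n : ℕ}

noncomputable def resM (μ : (Fin n → Bool) → ℝ × ℝ) (i : Fin n) (a : Bool) :
    (Fin n → Bool) → ℝ × ℝ :=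
  fun y => if y i = a then μ y else 0

noncomputable def restrictS {K : ℕ} (ν : Fin K → (Fin n → Bool) → ℝ × ℝ)
    (p : Fin K × Fin n) (a : Bool) : Fin K → (Fin n → Bool) → ℝ × ℝ :=
  Function.update ν p.1 (resM (ν p.1) p.2 a)

noncomputable def lsum {K : ℕ} {β : Type} (Φ : (Fin K → (Fin n → Bool) → ℝ × ℝ) → β → ℝ) :
    DTree Bool (Fin K × Fin n) β → (Fin K → (Fin n → Bool) → ℝ × ℝ) → ℝ
  | .leaf b, ν => Φ ν b
  | .node p ch, ν => ∑ a, lsum Φ (ch a) (restrictS ν p a)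

noncomputable def m0 (μ : (Fin n → Bool) → ℝ × ℝ) : ℝ := ∑ y, (μ y).1
noncomputable def m1 (μ : (Fin n → Bool) → ℝ × ℝ) : ℝ := ∑ y, (μ y).2
noncomputable def dm (μ : (Fin n → Bool) → ℝ × ℝ) (y : Fin n → Bool) : ℝ :=
  ((μ y).1 + (μ y).2) / 2
noncomputable def mt (μ : (Fin n → Bool) → ℝ × ℝ) : ℝ := ∑ y, dm μ y
noncomputable def ms (μ : (Fin n → Bool) → ℝ × ℝ) : ℝ := Real.sqrt (m0 μ * m1 μ)

lemma restrictS_ne {K : ℕ} (ν : Fin K → (Fin n → Bool) → ℝ × ℝ) {p : Fin K × Fin n}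
    (a : Bool) {j : Fin K} (h : j ≠ p.1) : restrictS ν p a j = ν j :=
  Function.update_of_ne h _ _

lemma restrictS_self {K : ℕ} (ν : Fin K → (Fin n → Bool) → ℝ × ℝ) (p : Fin K × Fin n)
    (a : Bool) : restrictS ν p a p.1 = resM (ν p.1) p.2 a :=
  Function.update_self _ _ _

end CorrSelProof

-- basic tree operations
def Uses {α ι β : Type} (P : ι → Prop) : DTree α ι β → Prop
  | .leaf _ => True
  | .node p ch => P p ∧ ∀ a, Uses P (ch a)

def graft {α ι β γ : Type} : DTree α ι β → DTree α ι γ → DTree α ι γ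
  | .leaf _, U => U
  | .node p ch, U => .node p (fun a => graft (ch a) U)

def reindex {α ι ι' β : Type} (g : ι → ι') : DTree α ι β → DTree α ι' β
  | .leaf b => .leaf b
  | .node p ch => .node (g p) (fun a => reindex g (ch a))

lemma uses_true {α ι β : Type} (T : DTree α ι β) : Uses (fun _ => True) T := by
  induction T with
  | leaf b => trivial
  | node p ch ih => exact ⟨trivial, fun a => ih a⟩

lemma uses_reindex {α ι ι' β : Type} (g : ι → ι') (P : ι' → Prop) (h : ∀ p, P (g p))
    (T : DTree α ι β) : Uses P (reindex g T) := by
  induction T with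
  | leaf b => trivial
  | node p ch ih => exact ⟨h p, fun a => ih a⟩

lemma depth_reindex {α ι ι' β : Type} [Fintype α] (g : ι → ι') (T : DTree α ι β) :
    (reindex g T).depth = T.depth := by
  induction T with
  | leaf b => rfl
  | node p ch ih =>
      show 1 + univ.sup (fun a => (reindex g (ch a)).depth) = 1 + univ.sup _
      simp [ih]

lemma depth_graft {α ι β γ : Type} [Fintype α] (T : DTree α ι β) (U : DTree α ι γ) :
    (graft T U).depth ≤ T.depth + U.depth := by
  induction T with
  | leaf b => simp [graft, DTree.depth]
  | node p ch ih =>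
      show 1 + univ.sup (fun a => (graft (ch a) U).depth) ≤ _
      have : univ.sup (fun a => (graft (ch a) U).depth) ≤
          (univ.sup fun a => (ch a).depth) + U.depth := by
        apply Finset.sup_le
        intro a _
        refine le_trans (ih a) (Nat.add_le_add_right ?_ U.depth)
        exact Finset.le_sup (f := fun a => (ch a).depth) (mem_univ a)
      show _ ≤ 1 + (univ.sup fun a => (ch a).depth) + U.depth
      omega

namespace CorrSelProof

variable {n : ℕ}

-- lsum structural lemmas
lemma lsum_congr {K : ℕ} {β : Type} {Φ Ψ : (Fin K → (Fin n → Bool) → ℝ × ℝ) → β → ℝ}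
    (h : ∀ ν b, Φ ν b = Ψ ν b) (T : DTree Bool (Fin K × Fin n) β)
    (ν : Fin K → (Fin n → Bool) → ℝ × ℝ) : lsum Φ T ν = lsum Ψ T ν := by
  induction T generalizing ν with
  | leaf b => exact h ν b
  | node p ch ih => exact Finset.sum_congr rfl fun a _ => ih a _

lemma lsum_graft {K : ℕ} {β γ : Type} (Φ : (Fin K → (Fin n → Bool) → ℝ × ℝ) → γ → ℝ)
    (A : DTree Bool (Fin K × Fin n) β) (C : DTree Bool (Fin K × Fin n) γ)
    (ν : Fin K → (Fin n → Bool) → ℝ × ℝ) :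
    lsum Φ (graft A C) ν = lsum (fun ν' _ => lsum Φ C ν') A ν := by
  induction A generalizing ν with
  | leaf b => rfl
  | node p ch ih =>
      show ∑ a, lsum Φ (graft (ch a) C) (restrictS ν p a) = _
      exact Finset.sum_congr rfl fun a _ => ih a _

lemma lsum_mono {K : ℕ} {β : Type} (P : Fin K × Fin n → Prop)
    (Q : (Fin K → (Fin n → Bool) → ℝ × ℝ) → Prop)
    {Φ Ψ : (Fin K → (Fin n → Bool) → ℝ × ℝ) → β → ℝ}
    (T : DTree Bool (Fin K × Fin n) β) (hT : Uses P T)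
    (hQ : ∀ ν p a, Q ν → P p → Q (restrictS ν p a))
    (hΦ : ∀ ν b, Q ν → Φ ν b ≤ Ψ ν b)
    (ν : Fin K → (Fin n → Bool) → ℝ × ℝ) (hν : Q ν) : lsum Φ T ν ≤ lsum Ψ T ν := by
  induction T generalizing ν with
  | leaf b => exact hΦ ν b hν
  | node p ch ih =>
      exact Finset.sum_le_sum fun a _ => ih a (hT.2 a) _ (hQ ν p a hν hT.1)

lemma lsum_factor {K : ℕ} {β : Type} (P : Fin K × Fin n → Prop)
    (H : (Fin K → (Fin n → Bool) → ℝ × ℝ) → ℝ)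
    (Φ : (Fin K → (Fin n → Bool) → ℝ × ℝ) → β → ℝ)
    (T : DTree Bool (Fin K × Fin n) β) (hT : Uses P T)
    (hH : ∀ ν p a, P p → H (restrictS ν p a) = H ν)
    (ν : Fin K → (Fin n → Bool) → ℝ × ℝ) :
    lsum (fun ν' b => H ν' * Φ ν' b) T ν = H ν * lsum Φ T ν := by
  induction T generalizing ν with
  | leaf b => rfl
  | node p ch ih =>
      show ∑ a, lsum _ (ch a) (restrictS ν p a) = _
      rw [show lsum Φ (DTree.node p ch) ν = ∑ a, lsum Φ (ch a) (restrictS ν p a) from rfl,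
        Finset.mul_sum]
      exact Finset.sum_congr rfl fun a _ => by rw [ih a (hT.2 a), hH ν p a hT.1]

lemma lsum_linear {K : ℕ} {β : Type} (c₁ c₂ : ℝ)
    (Φ Ψ : (Fin K → (Fin n → Bool) → ℝ × ℝ) → β → ℝ)
    (T : DTree Bool (Fin K × Fin n) β) (ν : Fin K → (Fin n → Bool) → ℝ × ℝ) :
    lsum (fun ν' b => c₁ * Φ ν' b + c₂ * Ψ ν' b) T ν = c₁ * lsum Φ T ν + c₂ * lsum Ψ T ν := by
  induction T generalizing ν with
  | leaf b => rfl
  | node p ch ih =>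
      show ∑ a, lsum _ (ch a) (restrictS ν p a) = _
      rw [show lsum Φ (DTree.node p ch) ν = ∑ a, lsum Φ (ch a) (restrictS ν p a) from rfl,
        show lsum Ψ (DTree.node p ch) ν = ∑ a, lsum Ψ (ch a) (restrictS ν p a) from rfl,
        Finset.mul_sum, Finset.mul_sum, ← Finset.sum_add_distrib]
      exact Finset.sum_congr rfl fun a _ => ih a _

lemma lsum_mul {K : ℕ} {β : Type} (c : ℝ)
    (Φ : (Fin K → (Fin n → Bool) → ℝ × ℝ) → β → ℝ)
    (T : DTree Bool (Fin K × Fin n) β) (ν : Fin K → (Fin n → Bool) → ℝ × ℝ) :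
    lsum (fun ν' b => c * Φ ν' b) T ν = c * lsum Φ T ν := by
  induction T generalizing ν with
  | leaf b => rfl
  | node p ch ih =>
      show ∑ a, lsum _ (ch a) (restrictS ν p a) = _
      rw [show lsum Φ (DTree.node p ch) ν = ∑ a, lsum Φ (ch a) (restrictS ν p a) from rfl,
        Finset.mul_sum]
      exact Finset.sum_congr rfl fun a _ => ih a _

end CorrSelProof

namespace CorrSelProof

variable {n : ℕ}

-- Fubini for product over samples
lemma fubini {K : ℕ} (G : Fin K → (Fin n → Bool) → ℝ) :
    ∑ x : (Fin K × Fin n) → Bool, ∏ j, G j (fun i => x (j, i)) = ∏ j, ∑ y, G j y := by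
  have h1 : ∑ x : (Fin K × Fin n) → Bool, ∏ j, G j (fun i => x (j, i))
      = ∑ h : Fin K → Fin n → Bool, ∏ j, G j (h j) := by
    apply Fintype.sum_equiv (Equiv.curry (Fin K) (Fin n) Bool)
    intro x
    rfl
  rw [h1, Finset.prod_univ_sum]
  rw [Fintype.piFinset_univ]

-- the R-property: pointwise restriction behavior
@[reducible] def Rprop (F : ((Fin n → Bool) → ℝ × ℝ) → (Fin n → Bool) → ℝ) : Prop :=
  ∀ μ i a y, F (resM μ i a) y = if y i = a then F μ y else 0

lemma Rprop_fst : Rprop (n := n) (fun μ y => (μ y).1) := by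
  intro μ i a y
  unfold resM
  by_cases h : y i = a <;> simp [h]

lemma Rprop_snd : Rprop (n := n) (fun μ y => (μ y).2) := by
  intro μ i a y
  unfold resM
  by_cases h : y i = a <;> simp [h]

lemma Rprop_dm : Rprop (n := n) (fun μ y => dm μ y) := by
  intro μ i a y
  unfold dm resM
  by_cases h : y i = a <;> simp [h]

lemma split_step {K : ℕ} {F : ((Fin n → Bool) → ℝ × ℝ) → (Fin n → Bool) → ℝ} (hF : Rprop F)
    (ν : Fin K → (Fin n → Bool) → ℝ × ℝ) (p : Fin K × Fin n) (a : Bool)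
    (x : (Fin K × Fin n) → Bool) :
    ∏ j, F (restrictS ν p a j) (fun i => x (j, i))
      = if x p = a then ∏ j, F (ν j) (fun i => x (j, i)) else 0 := by
  by_cases h : x p = a
  · rw [if_pos h]
    apply Finset.prod_congr rfl
    intro j _
    by_cases hj : j = p.1
    · rw [hj, show restrictS ν p a p.1 = resM (ν p.1) p.2 a from Function.update_self _ _ _,
        hF, if_pos (show x (p.1, p.2) = a by rwa [Prod.mk.eta])]
    · rw [restrictS_ne ν a hj]
  · rw [if_neg h]
    apply Finset.prod_eq_zero (mem_univ p.1)
    rw [show restrictS ν p a p.1 = resM (ν p.1) p.2 a from Function.update_self _ _ _]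
    rw [hF]
    rw [if_neg]
    show ¬ x (p.1, p.2) = a
    rwa [Prod.mk.eta]

lemma sum_split {K : ℕ} {β : Type} {F : ((Fin n → Bool) → ℝ × ℝ) → (Fin n → Bool) → ℝ}
    (hF : Rprop F) (W : β → ((Fin K × Fin n) → Bool) → ℝ)
    (p : Fin K × Fin n) (ch : Bool → DTree Bool (Fin K × Fin n) β)
    (ν : Fin K → (Fin n → Bool) → ℝ × ℝ) :
    ∑ x : (Fin K × Fin n) → Bool,
        (∏ j, F (ν j) (fun i => x (j, i))) * W ((DTree.node p ch).eval x) x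
      = ∑ a, ∑ x : (Fin K × Fin n) → Bool,
        (∏ j, F (restrictS ν p a j) (fun i => x (j, i))) * W ((ch a).eval x) x := by
  rw [Finset.sum_comm]
  apply Finset.sum_congr rfl
  intro x _
  rw [Finset.sum_eq_single (x p)]
  · rw [split_step hF, if_pos rfl]
    rfl
  · intro a _ ha
    rw [split_step hF, if_neg (fun hh => ha hh.symm), zero_mul]
  · intro h
    exact absurd (mem_univ _) h

-- mass splitting
lemma mass_split {K : ℕ} {F : ((Fin n → Bool) → ℝ × ℝ) → ℝ}
    (hF : ∀ μ (i : Fin n), F (resM μ i false) + F (resM μ i true) = F μ)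
    (ν : Fin K → (Fin n → Bool) → ℝ × ℝ) (p : Fin K × Fin n) :
    ∑ a, ∏ j, F (restrictS ν p a j) = ∏ j, F (ν j) := by
  have hsp : ∀ a : Bool, ∏ j, F (restrictS ν p a j)
      = F (resM (ν p.1) p.2 a) * ∏ j ∈ univ.erase p.1, F (ν j) := by
    intro a
    rw [← Finset.mul_prod_erase univ (fun j => F (restrictS ν p a j)) (mem_univ p.1)]
    congr 1
    · rw [show restrictS ν p a p.1 = resM (ν p.1) p.2 a from Function.update_self _ _ _]
    · exact Finset.prod_congr rfl fun j hj => by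
        rw [restrictS_ne ν a (Finset.ne_of_mem_erase hj)]
  rw [Fintype.sum_bool, hsp, hsp, ← add_mul, add_comm (F (resM (ν p.1) p.2 true)), hF]
  exact Finset.mul_prod_erase univ (fun j => F (ν j)) (mem_univ p.1)

lemma sum_resM_fst (μ : (Fin n → Bool) → ℝ × ℝ) (i : Fin n) :
    m0 (resM μ i false) + m0 (resM μ i true) = m0 μ := by
  unfold m0
  rw [← Finset.sum_add_distrib]
  apply Finset.sum_congr rfl
  intro y _
  unfold resM
  cases h : y i <;> simp [h]

lemma sum_resM_snd (μ : (Fin n → Bool) → ℝ × ℝ) (i : Fin n) :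
    m1 (resM μ i false) + m1 (resM μ i true) = m1 μ := by
  unfold m1
  rw [← Finset.sum_add_distrib]
  apply Finset.sum_congr rfl
  intro y _
  unfold resM
  cases h : y i <;> simp [h]

lemma sum_resM_dm (μ : (Fin n → Bool) → ℝ × ℝ) (i : Fin n) :
    mt (resM μ i false) + mt (resM μ i true) = mt μ := by
  unfold mt
  rw [← Finset.sum_add_distrib]
  apply Finset.sum_congr rfl
  intro y _
  unfold dm resM
  cases h : y i <;> simp [h]

-- total-mass evaluation
lemma lsum_tot {K : ℕ} {β : Type} (T : DTree Bool (Fin K × Fin n) β)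
    (ν : Fin K → (Fin n → Bool) → ℝ × ℝ) :
    lsum (fun ν' (_ : β) => ∏ j, mt (ν' j)) T ν = ∏ j, mt (ν j) := by
  induction T generalizing ν with
  | leaf b => rfl
  | node p ch ih =>
      show ∑ a, lsum _ (ch a) (restrictS ν p a) = _
      rw [Finset.sum_congr rfl fun a _ => ih a (restrictS ν p a)]
      exact mass_split (fun μ i => sum_resM_dm μ i) ν p

end CorrSelProof

namespace CorrSelProof

variable {n : ℕ}

noncomputable def Φsucc (f : (Fin n → Bool) → Option Bool) {k : ℕ}
    (ν : Fin k → (Fin n → Bool) → ℝ × ℝ) (b : Fin k × Bool) : ℝ :=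
  (∑ y, if f y = some b.2 then dm (ν b.1) y else 0) * ∏ j ∈ univ.erase b.1, mt (ν j)

noncomputable def Φbc {K β : Type} [Fintype K] (ν : K → (Fin n → Bool) → ℝ × ℝ) (_ : β) : ℝ :=
  ∏ j, ms (ν j)

lemma succ_eval (f : (Fin n → Bool) → Option Bool) {k : ℕ}
    (T : DTree Bool (Fin k × Fin n) (Fin k × Bool)) (ν : Fin k → (Fin n → Bool) → ℝ × ℝ) :
    lsum (Φsucc f) T ν = ∑ x : (Fin k × Fin n) → Bool,
      (∏ j, dm (ν j) (fun i => x (j, i))) *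
        (if f (fun i => x ((T.eval x).1, i)) = some (T.eval x).2 then 1 else 0) := by
  induction T generalizing ν with
  | leaf b =>
    obtain ⟨i, c⟩ := b
    show Φsucc f ν (i, c) = ∑ x : (Fin k × Fin n) → Bool,
      (∏ j, dm (ν j) (fun i' => x (j, i'))) *
        (if f (fun i' => x (i, i')) = some c then 1 else 0)
    have hpt : ∀ x : (Fin k × Fin n) → Bool,
        (∏ j, dm (ν j) (fun i' => x (j, i'))) *
          (if f (fun i' => x (i, i')) = some c then 1 else 0)
        = ∏ j, (if j = i then (if f (fun i' => x (j, i')) = some c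
            then dm (ν j) (fun i' => x (j, i')) else 0)
            else dm (ν j) (fun i' => x (j, i'))) := by
      intro x
      rw [← Finset.mul_prod_erase univ
        (fun j => if j = i then (if f (fun i' => x (j, i')) = some c
            then dm (ν j) (fun i' => x (j, i')) else 0)
            else dm (ν j) (fun i' => x (j, i'))) (mem_univ i),
        ← Finset.mul_prod_erase univ (fun j => dm (ν j) (fun i' => x (j, i'))) (mem_univ i)]
      have herase : (∏ j ∈ univ.erase i, if j = i then (if f (fun i' => x (j, i')) = some c
            then dm (ν j) (fun i' => x (j, i')) else 0)
            else dm (ν j) (fun i' => x (j, i')))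
          = ∏ j ∈ univ.erase i, dm (ν j) (fun i' => x (j, i')) :=
        Finset.prod_congr rfl fun j hj => if_neg (Finset.ne_of_mem_erase hj)
      rw [herase, if_pos rfl]
      by_cases hc : f (fun i' => x (i, i')) = some c
      · rw [if_pos hc, if_pos hc]; ring
      · rw [if_neg hc, if_neg hc]; ring
    calc Φsucc f ν (i, c)
        = ∏ j, ∑ y, (if j = i then (if f y = some c then dm (ν j) y else 0)
            else dm (ν j) y) := by
          unfold Φsucc
          rw [← Finset.mul_prod_erase univ
            (fun j => ∑ y, (if j = i then (if f y = some c then dm (ν j) y else 0)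
              else dm (ν j) y)) (mem_univ i)]
          congr 1
          · exact Finset.sum_congr rfl fun y _ => by rw [if_pos rfl]
          · refine Finset.prod_congr rfl fun j hj => ?_
            unfold mt
            exact Finset.sum_congr rfl fun y _ => by
              rw [if_neg (Finset.ne_of_mem_erase hj)]
      _ = ∑ x : (Fin k × Fin n) → Bool,
            ∏ j, (if j = i then (if f (fun i' => x (j, i')) = some c
              then dm (ν j) (fun i' => x (j, i')) else 0)
              else dm (ν j) (fun i' => x (j, i'))) := (fubini _).symm
      _ = _ := Finset.sum_congr rfl fun x _ => (hpt x).symm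
  | node p ch ih =>
    show ∑ a, lsum (Φsucc f) (ch a) (restrictS ν p a) = _
    rw [sum_split Rprop_dm
      (fun b x => if f (fun i => x (b.1, i)) = some b.2 then 1 else 0) p ch ν]
    exact Finset.sum_congr rfl fun a _ => ih a (restrictS ν p a)

def Inv (f : (Fin n → Bool) → Option Bool) {K : ℕ} (ν : Fin K → (Fin n → Bool) → ℝ × ℝ) : Prop :=
  ∀ j y, 0 ≤ (ν j y).1 ∧ 0 ≤ (ν j y).2 ∧
    ((ν j y).1 ≠ 0 → f y = some false) ∧ ((ν j y).2 ≠ 0 → f y = some true)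

lemma Inv_restrict (f : (Fin n → Bool) → Option Bool) {K : ℕ}
    {ν : Fin K → (Fin n → Bool) → ℝ × ℝ} (h : Inv f ν) (p : Fin K × Fin n) (a : Bool) :
    Inv f (restrictS ν p a) := by
  intro j y
  by_cases hj : j = p.1
  · rw [hj, show restrictS ν p a p.1 = resM (ν p.1) p.2 a from Function.update_self _ _ _]
    unfold resM
    by_cases hy : y p.2 = a
    · rw [if_pos hy]; exact h p.1 y
    · rw [if_neg hy]; simp
  · rw [restrictS_ne ν a hj]; exact h j y

lemma mt_eq (μ : (Fin n → Bool) → ℝ × ℝ) : mt μ = (m0 μ + m1 μ) / 2 := by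
  unfold mt dm m0 m1
  rw [← Finset.sum_add_distrib, ← Finset.sum_div]

lemma sqrt_le_avg {a b : ℝ} (ha : 0 ≤ a) (hb : 0 ≤ b) : Real.sqrt (a * b) ≤ (a + b) / 2 := by
  have h1 : a * b ≤ ((a + b) / 2) ^ 2 := by nlinarith [sq_nonneg (a - b)]
  calc Real.sqrt (a * b) ≤ Real.sqrt (((a + b) / 2) ^ 2) := Real.sqrt_le_sqrt h1
    _ = (a + b) / 2 := Real.sqrt_sq (by positivity)

lemma key20 {u v : ℝ} (hu : 0 ≤ u) (hv : 0 ≤ v) :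
    Real.sqrt (u * v) ≤ (6 * u + 17 * v) / 20 := by
  have h1 : u * v ≤ ((6 * u + 17 * v) / 20) ^ 2 := by
    nlinarith [sq_nonneg (6 * u - 17 * v), mul_nonneg hu hv]
  calc Real.sqrt (u * v) ≤ Real.sqrt (((6 * u + 17 * v) / 20) ^ 2) := Real.sqrt_le_sqrt h1
    _ = (6 * u + 17 * v) / 20 := Real.sqrt_sq (by positivity)

lemma half_mass (f : (Fin n → Bool) → Option Bool) {K : ℕ}
    {ν : Fin K → (Fin n → Bool) → ℝ × ℝ} (h : Inv f ν) (i : Fin K) (c : Bool) :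
    (∑ y, if f y = some c then dm (ν i) y else 0)
      = (if c then m1 (ν i) else m0 (ν i)) / 2 := by
  have hpt : ∀ y, (if f y = some c then dm (ν i) y else 0)
      = (if c then (ν i y).2 else (ν i y).1) / 2 := by
    intro y
    obtain ⟨h0, h1, hs0, hs1⟩ := h i y
    by_cases hf : f y = some c
    · rw [if_pos hf]
      unfold dm
      cases c with
      | false =>
        have : (ν i y).2 = 0 := by
          by_contra hne
          rw [hs1 hne] at hf
          exact Bool.noConfusion (Option.some.inj hf)
        rw [this]; norm_num
      | true =>
        have : (ν i y).1 = 0 := by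
          by_contra hne
          rw [hs0 hne] at hf
          exact Bool.noConfusion (Option.some.inj hf)
        rw [this]; norm_num
    · rw [if_neg hf]
      cases c with
      | false =>
        have : (ν i y).1 = 0 := by
          by_contra hne
          exact hf (hs0 hne)
        rw [this]; norm_num
      | true =>
        have : (ν i y).2 = 0 := by
          by_contra hne
          exact hf (hs1 hne)
        rw [this]; norm_num
  rw [Finset.sum_congr rfl fun y _ => hpt y, ← Finset.sum_div]
  cases c <;> simp [m0, m1]

lemma pli (f : (Fin n → Bool) → Option Bool) {K : ℕ}
    {ν : Fin K → (Fin n → Bool) → ℝ × ℝ} (h : Inv f ν) (b : Fin K × Bool) :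
    Φbc ν b ≤ 17/10 * ((fun ν' (_ : Fin K × Bool) => ∏ j, mt (ν' j)) ν b)
      + (-(11/10)) * Φsucc f ν b := by
  obtain ⟨i, c⟩ := b
  show Φbc ν (i, c) ≤ 17/10 * (∏ j, mt (ν j)) + (-(11/10)) * Φsucc f ν (i, c)
  have h00 : ∀ j, 0 ≤ m0 (ν j) := fun j => Finset.sum_nonneg fun y _ => (h j y).1
  have h11 : ∀ j, 0 ≤ m1 (ν j) := fun j => Finset.sum_nonneg fun y _ => (h j y).2.1
  have hmt : ∀ j, 0 ≤ mt (ν j) := fun j => by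
    rw [mt_eq]; have := h00 j; have := h11 j; linarith
  have hms : ∀ j, 0 ≤ ms (ν j) := fun j => Real.sqrt_nonneg _
  have hmsmt : ∀ j, ms (ν j) ≤ mt (ν j) := fun j => by
    rw [mt_eq]; exact sqrt_le_avg (h00 j) (h11 j)
  set u : ℝ := if c then m1 (ν i) else m0 (ν i) with hu
  set v : ℝ := if c then m0 (ν i) else m1 (ν i) with hv
  have hu0 : 0 ≤ u := by rw [hu]; cases c <;> simp [h00 i, h11 i]
  have hv0 : 0 ≤ v := by rw [hv]; cases c <;> simp [h00 i, h11 i]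
  have hmsi : ms (ν i) = Real.sqrt (u * v) := by
    unfold ms; rw [hu, hv]; cases c <;> simp [mul_comm]
  have hmti : mt (ν i) = (u + v) / 2 := by
    rw [mt_eq, hu, hv]; cases c <;> simp <;> ring
  set P : ℝ := ∏ j ∈ univ.erase i, mt (ν j) with hP
  have hP0 : 0 ≤ P := Finset.prod_nonneg fun j _ => hmt j
  have hΦbc : Φbc ν (i, c) ≤ Real.sqrt (u * v) * P := by
    unfold Φbc
    rw [← Finset.mul_prod_erase univ (fun j => ms (ν j)) (mem_univ i), ← hmsi]
    exact mul_le_mul_of_nonneg_left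
      (Finset.prod_le_prod (fun j _ => hms j) (fun j _ => hmsmt j)) (hms i) |>.trans
      (le_of_eq rfl)
  have htot : (∏ j, mt (ν j)) = (u + v) / 2 * P := by
    rw [← Finset.mul_prod_erase univ (fun j => mt (ν j)) (mem_univ i), hmti]
  have hsc : Φsucc f ν (i, c) = u / 2 * P := by
    unfold Φsucc
    rw [half_mass f h i c, ← hu]
  rw [htot, hsc]
  have hkey : Real.sqrt (u * v) * P ≤ (6 * u + 17 * v) / 20 * P :=
    mul_le_mul_of_nonneg_right (key20 hu0 hv0) hP0
  calc Φbc ν (i, c) ≤ Real.sqrt (u * v) * P := hΦbc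
    _ ≤ (6 * u + 17 * v) / 20 * P := hkey
    _ = 17/10 * ((u + v) / 2 * P) + (-(11/10)) * (u / 2 * P) := by ring

lemma core (f : (Fin n → Bool) → Option Bool) (D0 D1 : (Fin n → Bool) → ℝ)
    (hD0 : IsDist D0) (hD1 : IsDist D1)
    (hs0 : ∀ x, D0 x ≠ 0 → f x = some false) (hs1 : ∀ x, D1 x ≠ 0 → f x = some true)
    {k : ℕ} (T : DTree Bool (Fin k × Fin n) (Fin k × Bool))
    (hsucc : 2/3 ≤ ∑ x : (Fin k × Fin n) → Bool,
      (∏ j, dm ((fun _ : Fin k => fun y => (D0 y, D1 y)) j) (fun i => x (j, i))) *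
        (if f (fun i => x ((T.eval x).1, i)) = some (T.eval x).2 then 1 else 0)) :
    lsum Φbc T (fun _ => fun y => (D0 y, D1 y)) ≤ 29/30 := by
  set init : Fin k → (Fin n → Bool) → ℝ × ℝ := fun _ => fun y => (D0 y, D1 y) with hinit
  have hInv : Inv f init := by
    intro j y
    exact ⟨hD0.1 y, hD1.1 y, fun h => hs0 y h, fun h => hs1 y h⟩
  have h1 : lsum Φbc T init ≤ lsum (fun ν (b : Fin k × Bool) =>
      17/10 * ((fun ν' (_ : Fin k × Bool) => ∏ j, mt (ν' j)) ν b)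
        + (-(11/10)) * Φsucc f ν b) T init := by
    refine lsum_mono (fun _ => True) (Inv f) T (uses_true T)
      (fun ν p a hν _ => Inv_restrict f hν p a) (fun ν b hν => pli f hν b) init hInv
  rw [lsum_linear, lsum_tot, succ_eval] at h1
  have hmt1 : ∀ j : Fin k, mt (init j) = 1 := by
    intro j
    rw [mt_eq]
    show (∑ y, (D0 y, D1 y).1 + ∑ y, (D0 y, D1 y).2) / 2 = 1
    simp only []
    rw [show (∑ y, (D0 y, D1 y).1) = ∑ y, D0 y from rfl,
      show (∑ y, (D0 y, D1 y).2) = ∑ y, D1 y from rfl, hD0.2, hD1.2]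
    norm_num
  rw [Finset.prod_congr rfl fun j _ => hmt1 j, Finset.prod_const_one] at h1
  calc lsum Φbc T init ≤ _ := h1
    _ ≤ 17/10 * 1 + (-(11/10)) * (2/3) := by
        have := hsucc
        nlinarith
    _ ≤ 29/30 := by norm_num

end CorrSelProof

namespace CorrSelProof

variable {n : ℕ}

lemma lsum_reindex {k K : ℕ} {β : Type} (emb : Fin k → Fin K) (hinj : Function.Injective emb)
    (Ψ : (Fin k → (Fin n → Bool) → ℝ × ℝ) → β → ℝ) (T : DTree Bool (Fin k × Fin n) β)
    (ν : Fin K → (Fin n → Bool) → ℝ × ℝ) :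
    lsum (fun ν' b => Ψ (fun j' => ν' (emb j')) b)
        (reindex (fun p => (emb p.1, p.2)) T) ν
      = lsum Ψ T (fun j' => ν (emb j')) := by
  induction T generalizing ν with
  | leaf b => rfl
  | node p ch ih =>
      show ∑ a, lsum _ (reindex _ (ch a)) (restrictS ν (emb p.1, p.2) a) = _
      rw [show lsum Ψ (DTree.node p ch) (fun j' => ν (emb j'))
        = ∑ a, lsum Ψ (ch a) (restrictS (fun j' => ν (emb j')) p a) from rfl]
      refine Finset.sum_congr rfl fun a _ => ?_
      rw [ih a]
      congr 1
      funext j'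
      by_cases hj : j' = p.1
      · rw [hj]
        exact (restrictS_self ν (emb p.1, p.2) a).trans
          (restrictS_self (fun j'' => ν (emb j'')) p a).symm
      · exact (restrictS_ne ν a (show emb j' ≠ (emb p.1, p.2).1 from
          fun hc => hj (hinj hc))).trans
          (restrictS_ne (fun j'' => ν (emb j'')) a hj).symm

def embB (k m : ℕ) (t : Fin m) (j : Fin k) : Fin (m * k) :=
  ⟨t.val * k + j.val, by
    have ht : t.val + 1 ≤ m := t.isLt
    have hj : j.val < k := j.isLt
    have h2 : (t.val + 1) * k ≤ m * k := Nat.mul_le_mul_right k ht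
    have h3 : (t.val + 1) * k = t.val * k + k := by ring
    omega⟩

lemma embB_eq {k m : ℕ} {t t' : Fin m} {j j' : Fin k}
    (h : embB k m t j = embB k m t' j') : t = t' ∧ j = j' := by
  have hv : t.val * k + j.val = t'.val * k + j'.val := congrArg Fin.val h
  have hj : j.val < k := j.isLt
  have hj' : j'.val < k := j'.isLt
  have htt : t.val = t'.val := by
    rcases Nat.lt_trichotomy t.val t'.val with hlt | heq | hgt
    · exfalso
      have h2 : (t.val + 1) * k ≤ t'.val * k := Nat.mul_le_mul_right k hlt
      have h3 : (t.val + 1) * k = t.val * k + k := by ring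
      omega
    · exact heq
    · exfalso
      have h2 : (t'.val + 1) * k ≤ t.val * k := Nat.mul_le_mul_right k hgt
      have h3 : (t'.val + 1) * k = t'.val * k + k := by ring
      omega
  refine ⟨Fin.ext htt, Fin.ext ?_⟩
  rw [← htt] at hv
  exact Nat.add_left_cancel hv

lemma embB_inj {k m : ℕ} (t : Fin m) : Function.Injective (embB k m t) :=
  fun _ _ h => (embB_eq h).2

def gmap (k m : ℕ) (t : Fin m) : Fin k × Fin n → Fin (m * k) × Fin n :=
  fun p => (embB k m t p.1, p.2)

noncomputable def blkB (k m : ℕ) (t : Fin m) : Finset (Fin (m * k)) :=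
  Finset.image (embB k m t) univ

set_option maxHeartbeats 1000000 in
lemma sbl {k m : ℕ} (T : DTree Bool (Fin k × Fin n) (Fin k × Bool))
    (pD : (Fin n → Bool) → ℝ × ℝ) (hpd1 : ms pD = 1)
    (hcore : lsum Φbc T (fun _ : Fin k => pD) ≤ 29/30)
    (t : Fin m) (ν : Fin (m * k) → (Fin n → Bool) → ℝ × ℝ)
    (hfresh : ∀ j', ν (embB k m t j') = pD) :
    lsum Φbc (reindex (gmap k m t) T) ν ≤ 29/30 * ∏ j, ms (ν j) := by
  show lsum Φbc (reindex (fun p : Fin k × Fin n => (embB k m t p.1, p.2)) T) ν ≤ _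
  set A := reindex (fun p : Fin k × Fin n => (embB k m t p.1, p.2)) T with hA
  have husesA : Uses (fun q => q.1 ∈ blkB k m t) A :=
    uses_reindex (fun p : Fin k × Fin n => (embB k m t p.1, p.2)) (fun q => q.1 ∈ blkB k m t)
      (fun p => Finset.mem_image_of_mem _ (mem_univ p.1)) T
  have hprodimg : ∀ ν' : Fin (m * k) → (Fin n → Bool) → ℝ × ℝ,
      (∏ j ∈ blkB k m t, ms (ν' j)) = ∏ j' : Fin k, ms (ν' (embB k m t j')) := by
    intro ν'
    exact Finset.prod_image fun x _ y _ h => (embB_eq h).2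
  have hsplit : ∀ (ν' : Fin (m * k) → (Fin n → Bool) → ℝ × ℝ) (b : Fin k × Bool),
      Φbc ν' b = (∏ j ∈ univ \ blkB k m t, ms (ν' j)) *
        Φbc (fun j' => ν' (embB k m t j')) b := by
    intro ν' b
    show (∏ j, ms (ν' j)) = _ * ∏ j' : Fin k, ms (ν' (embB k m t j'))
    rw [← hprodimg ν', Finset.prod_sdiff (subset_univ (blkB k m t))]
  rw [lsum_congr hsplit A ν,
    lsum_factor (fun q => q.1 ∈ blkB k m t)
      (fun ν' => ∏ j ∈ univ \ blkB k m t, ms (ν' j))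
      (fun ν' b => Φbc (fun j' => ν' (embB k m t j')) b) A husesA
      (fun ν' p a hp => Finset.prod_congr rfl fun j hj => by
        rw [restrictS_ne ν' a]
        intro hc
        rw [hc] at hj
        exact (Finset.mem_sdiff.mp hj).2 hp) ν]
  rw [hA, lsum_reindex (embB k m t) (embB_inj t) Φbc T ν]
  rw [show (fun j' => ν (embB k m t j')) = (fun _ : Fin k => pD) from funext hfresh]
  have hH0 : 0 ≤ ∏ j ∈ univ \ blkB k m t, ms (ν j) :=
    Finset.prod_nonneg fun j _ => Real.sqrt_nonneg _
  have hfull : (∏ j, ms (ν j)) = (∏ j ∈ univ \ blkB k m t, ms (ν j)) := by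
    rw [← Finset.prod_sdiff (subset_univ (blkB k m t)), hprodimg ν]
    rw [show (∏ j' : Fin k, ms (ν (embB k m t j'))) = ∏ j' : Fin k, ms pD from
      Finset.prod_congr rfl fun j' _ => by rw [hfresh j'], hpd1]
    simp
  rw [hfull]
  calc (∏ j ∈ univ \ blkB k m t, ms (ν j)) * lsum Φbc T (fun _ => pD)
      ≤ (∏ j ∈ univ \ blkB k m t, ms (ν j)) * (29/30) :=
        mul_le_mul_of_nonneg_left hcore hH0
    _ = 29/30 * ∏ j ∈ univ \ blkB k m t, ms (ν j) := by ring

noncomputable def chainT {k m : ℕ} (T : DTree Bool (Fin k × Fin n) (Fin k × Bool))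
    (l : List (Fin m)) : DTree Bool (Fin (m * k) × Fin n) Unit :=
  l.foldr (fun t acc => graft (reindex (gmap k m t) T) acc) (.leaf ())

lemma depth_chain {k m : ℕ} (T : DTree Bool (Fin k × Fin n) (Fin k × Bool))
    (l : List (Fin m)) : (chainT T l).depth ≤ l.length * T.depth := by
  induction l with
  | nil => simp [chainT, DTree.depth]
  | cons t rest ih =>
      show (graft (reindex (gmap k m t) T) (chainT T rest)).depth ≤ _
      calc (graft (reindex (gmap k m t) T) (chainT T rest)).depth
          ≤ (reindex (gmap k m t) T).depth + (chainT T rest).depth := depth_graft _ _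
        _ ≤ T.depth + rest.length * T.depth := by
            rw [depth_reindex]
            exact Nat.add_le_add_left ih _
        _ = (rest.length + 1) * T.depth := by ring
        _ = (t :: rest).length * T.depth := by rw [List.length_cons]

lemma chain_bound {k m : ℕ} (T : DTree Bool (Fin k × Fin n) (Fin k × Bool))
    (pD : (Fin n → Bool) → ℝ × ℝ) (hpd1 : ms pD = 1)
    (hcore : lsum Φbc T (fun _ : Fin k => pD) ≤ 29/30) :
    ∀ l : List (Fin m), l.Nodup →
      ∀ ν : Fin (m * k) → (Fin n → Bool) → ℝ × ℝ,
        (∀ t ∈ l, ∀ j', ν (embB k m t j') = pD) →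
        lsum Φbc (chainT T l) ν ≤ (29/30) ^ l.length * ∏ j, ms (ν j) := by
  intro l
  induction l with
  | nil =>
      intro _ ν _
      show Φbc ν () ≤ _
      rw [List.length_nil, pow_zero, one_mul]
      exact le_of_eq rfl
  | cons t rest ih =>
      intro hnd ν hfresh
      show lsum Φbc (graft (reindex (gmap k m t) T) (chainT T rest)) ν ≤ _
      rw [lsum_graft]
      have h1 : lsum (fun ν' (_ : Fin k × Bool) => lsum Φbc (chainT T rest) ν')
            (reindex (gmap k m t) T) ν
          ≤ lsum (fun ν' (_ : Fin k × Bool) => (29/30) ^ rest.length * Φbc ν' ())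
            (reindex (gmap k m t) T) ν := by
        refine lsum_mono (fun q => q.1 ∈ blkB k m t)
          (fun ν' => ∀ t' ∈ rest, ∀ j', ν' (embB k m t' j') = pD)
          _ (uses_reindex (gmap k m t) (fun q => q.1 ∈ blkB k m t)
            (fun p => Finset.mem_image_of_mem _ (mem_univ p.1)) T)
          ?_ ?_ ν ?_
        · intro ν' p a hQ hp t' ht' j'
          rw [restrictS_ne ν' a, hQ t' ht' j']
          intro hc
          obtain ⟨j₀, _, hj₀⟩ := Finset.mem_image.mp hp
          rw [← hj₀] at hc
          have := (embB_eq hc).1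
          rw [this] at ht'
          exact (List.nodup_cons.mp hnd).1 ht'
        · intro ν' b hQ
          exact ih (List.nodup_cons.mp hnd).2 ν' hQ
        · intro t' ht' j'
          exact hfresh t' (List.mem_cons_of_mem t ht') j'
      have h2 : lsum (fun ν' (_ : Fin k × Bool) => (29/30) ^ rest.length * Φbc ν' ())
            (reindex (gmap k m t) T) ν
          = (29/30) ^ rest.length * lsum Φbc (reindex (gmap k m t) T) ν := by
        rw [lsum_mul ((29/30) ^ rest.length) (fun ν' _ => Φbc ν' ())]
        congr 1
      have h3 := sbl T pD hpd1 hcore t ν (fun j' => hfresh t (List.mem_cons_self) j')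
      calc lsum (fun ν' (_ : Fin k × Bool) => lsum Φbc (chainT T rest) ν')
            (reindex (gmap k m t) T) ν
          ≤ (29/30) ^ rest.length * lsum Φbc (reindex (gmap k m t) T) ν := by rw [← h2]; exact h1
        _ ≤ (29/30) ^ rest.length * (29/30 * ∏ j, ms (ν j)) := by
            apply mul_le_mul_of_nonneg_left h3 (by positivity)
        _ = (29/30) ^ (t :: rest).length * ∏ j, ms (ν j) := by
            rw [List.length_cons, pow_succ]
            ring

end CorrSelProof

namespace CorrSelProof

variable {n : ℕ}

def NN {K : ℕ} (ν : Fin K → (Fin n → Bool) → ℝ × ℝ) : Prop :=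
  ∀ j y, 0 ≤ (ν j y).1 ∧ 0 ≤ (ν j y).2

lemma NN_restrict {K : ℕ} {ν : Fin K → (Fin n → Bool) → ℝ × ℝ} (h : NN ν)
    (p : Fin K × Fin n) (a : Bool) : NN (restrictS ν p a) := by
  intro j y
  by_cases hj : j = p.1
  · rw [hj, restrictS_self]
    unfold resM
    by_cases hy : y p.2 = a
    · rw [if_pos hy]; exact h p.1 y
    · rw [if_neg hy]; simp
  · rw [restrictS_ne ν a hj]; exact h j y

open scoped Classical in
noncomputable def dec {K : ℕ} {β : Type} :
    DTree Bool (Fin K × Fin n) β → (Fin K → (Fin n → Bool) → ℝ × ℝ) →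
      DTree Bool (Fin K × Fin n) Bool
  | .leaf _, ν => .leaf (if (∏ j, m0 (ν j)) ≤ ∏ j, m1 (ν j) then true else false)
  | .node p ch, ν => .node p (fun a => dec (ch a) (restrictS ν p a))

lemma depth_dec {K : ℕ} {β : Type} (U : DTree Bool (Fin K × Fin n) β)
    (ν : Fin K → (Fin n → Bool) → ℝ × ℝ) : (dec U ν).depth = U.depth := by
  induction U generalizing ν with
  | leaf b => rfl
  | node p ch ih =>
      show 1 + univ.sup (fun a => (dec (ch a) (restrictS ν p a)).depth) = _
      simp only [ih]
      rfl

lemma prod_ms {K : ℕ} (ν : Fin K → (Fin n → Bool) → ℝ × ℝ) (hNN : NN ν) :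
    (∏ j, ms (ν j)) = Real.sqrt ((∏ j, m0 (ν j)) * ∏ j, m1 (ν j)) := by
  have h0 : ∀ j, 0 ≤ m0 (ν j) := fun j => Finset.sum_nonneg fun y _ => (hNN j y).1
  have h1 : ∀ j, 0 ≤ m1 (ν j) := fun j => Finset.sum_nonneg fun y _ => (hNN j y).2
  have key : ∀ s : Finset (Fin K),
      (∏ j ∈ s, ms (ν j)) = Real.sqrt ((∏ j ∈ s, m0 (ν j)) * ∏ j ∈ s, m1 (ν j)) := by
    intro s
    induction s using Finset.induction_on with
    | empty => simp
    | insert x s' hx ih =>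
        rw [Finset.prod_insert hx, Finset.prod_insert hx, Finset.prod_insert hx, ih]
        unfold ms
        rw [← Real.sqrt_mul (mul_nonneg (h0 x) (h1 x))]
        congr 1
        ring
  exact key univ

set_option maxHeartbeats 2000000 in
lemma ml {K : ℕ} {β : Type} (U : DTree Bool (Fin K × Fin n) β) :
    ∀ (ν : Fin K → (Fin n → Bool) → ℝ × ℝ), NN ν →
    (∏ j, m0 (ν j)) + (∏ j, m1 (ν j)) - 2 * lsum Φbc U ν ≤
      (∑ x : (Fin K × Fin n) → Bool, (∏ j, (ν j (fun i => x (j, i))).1) *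
          (if (dec U ν).eval x = false then 1 else 0))
        + ∑ x : (Fin K × Fin n) → Bool, (∏ j, (ν j (fun i => x (j, i))).2) *
          (if (dec U ν).eval x = true then 1 else 0) := by
  induction U with
  | leaf b =>
    intro ν hNN
    have hW0 : 0 ≤ ∏ j, m0 (ν j) :=
      Finset.prod_nonneg fun j _ => Finset.sum_nonneg fun y _ => (hNN j y).1
    have hW1 : 0 ≤ ∏ j, m1 (ν j) :=
      Finset.prod_nonneg fun j _ => Finset.sum_nonneg fun y _ => (hNN j y).2
    have hbc : lsum Φbc (DTree.leaf b) ν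
        = Real.sqrt ((∏ j, m0 (ν j)) * ∏ j, m1 (ν j)) := prod_ms ν hNN
    have hsum0 : (∑ x : (Fin K × Fin n) → Bool, ∏ j, (ν j (fun i => x (j, i))).1)
        = ∏ j, m0 (ν j) := fubini (fun j y => (ν j y).1)
    have hsum1 : (∑ x : (Fin K × Fin n) → Bool, ∏ j, (ν j (fun i => x (j, i))).2)
        = ∏ j, m1 (ν j) := fubini (fun j y => (ν j y).2)
    rw [hbc]
    by_cases hc : (∏ j, m0 (ν j)) ≤ ∏ j, m1 (ν j)
    · have hdec : dec (DTree.leaf b) ν = DTree.leaf true := by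
        unfold dec
        rw [if_pos hc]
      rw [hdec]
      have he : ∀ x : (Fin K × Fin n) → Bool,
          (DTree.leaf true : DTree Bool (Fin K × Fin n) Bool).eval x = true := fun _ => rfl
      simp only [he]
      norm_num
      rw [hsum1]
      have hs : (∏ j, m0 (ν j)) = Real.sqrt ((∏ j, m0 (ν j)) * (∏ j, m0 (ν j))) :=
        (Real.sqrt_mul_self hW0).symm
      have hmono : Real.sqrt ((∏ j, m0 (ν j)) * (∏ j, m0 (ν j)))
          ≤ Real.sqrt ((∏ j, m0 (ν j)) * ∏ j, m1 (ν j)) :=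
        Real.sqrt_le_sqrt (mul_le_mul_of_nonneg_left hc hW0)
      linarith [hs ▸ hmono]
    · have hdec : dec (DTree.leaf b) ν = DTree.leaf false := by
        unfold dec
        rw [if_neg hc]
      rw [hdec]
      have he : ∀ x : (Fin K × Fin n) → Bool,
          (DTree.leaf false : DTree Bool (Fin K × Fin n) Bool).eval x = false := fun _ => rfl
      simp only [he]
      norm_num
      rw [hsum0]
      have hc' : (∏ j, m1 (ν j)) ≤ ∏ j, m0 (ν j) := le_of_not_ge hc
      have hs : (∏ j, m1 (ν j)) = Real.sqrt ((∏ j, m1 (ν j)) * (∏ j, m1 (ν j))) :=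
        (Real.sqrt_mul_self hW1).symm
      have hmono : Real.sqrt ((∏ j, m1 (ν j)) * (∏ j, m1 (ν j)))
          ≤ Real.sqrt ((∏ j, m0 (ν j)) * ∏ j, m1 (ν j)) :=
        Real.sqrt_le_sqrt (mul_le_mul_of_nonneg_right hc' hW1)
      linarith [hs ▸ hmono]
  | node p ch ih =>
    intro ν hNN
    have hr0 : (∑ x : (Fin K × Fin n) → Bool, (∏ j, (ν j (fun i => x (j, i))).1) *
          (if (DTree.node p (fun a => dec (ch a) (restrictS ν p a))).eval x = false
            then 1 else 0))
        = ∑ a, ∑ x : (Fin K × Fin n) → Bool,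
            (∏ j, ((restrictS ν p a) j (fun i => x (j, i))).1) *
            (if (dec (ch a) (restrictS ν p a)).eval x = false then 1 else 0) :=
      sum_split Rprop_fst (fun (b : Bool) (_ : (Fin K × Fin n) → Bool) =>
        if b = false then 1 else 0) p (fun a => dec (ch a) (restrictS ν p a)) ν
    have hr1 : (∑ x : (Fin K × Fin n) → Bool, (∏ j, (ν j (fun i => x (j, i))).2) *
          (if (DTree.node p (fun a => dec (ch a) (restrictS ν p a))).eval x = true
            then 1 else 0))
        = ∑ a, ∑ x : (Fin K × Fin n) → Bool,
            (∏ j, ((restrictS ν p a) j (fun i => x (j, i))).2) *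
            (if (dec (ch a) (restrictS ν p a)).eval x = true then 1 else 0) :=
      sum_split Rprop_snd (fun (b : Bool) (_ : (Fin K × Fin n) → Bool) =>
        if b = true then 1 else 0) p (fun a => dec (ch a) (restrictS ν p a)) ν
    have hd : dec (DTree.node p ch) ν
        = DTree.node p (fun a => dec (ch a) (restrictS ν p a)) := rfl
    rw [hd, hr0, hr1, ← Finset.sum_add_distrib]
    have hl0 : (∏ j, m0 (ν j)) = ∑ a, ∏ j, m0 (restrictS ν p a j) :=
      (mass_split (fun μ i => sum_resM_fst μ i) ν p).symm
    have hl1 : (∏ j, m1 (ν j)) = ∑ a, ∏ j, m1 (restrictS ν p a j) :=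
      (mass_split (fun μ i => sum_resM_snd μ i) ν p).symm
    have hlb : lsum Φbc (DTree.node p ch) ν = ∑ a, lsum Φbc (ch a) (restrictS ν p a) := rfl
    rw [hl0, hl1, hlb, Finset.mul_sum, ← Finset.sum_add_distrib, ← Finset.sum_sub_distrib]
    exact Finset.sum_le_sum fun a _ => ih a (restrictS ν p a) (NN_restrict hNN p a)

end CorrSelProof

namespace CorrSelProof

variable {n : ℕ}

lemma prS_ind {γ : Type} [Fintype γ] (D : γ → ℝ) (P : γ → Prop) [DecidablePred P] :
    prS D {x | P x} = ∑ x, D x * (if P x then 1 else 0) := by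
  unfold prS
  refine Finset.sum_congr rfl fun x _ => ?_
  by_cases h : P x <;> simp [Set.indicator_apply, Set.mem_setOf_eq, h]

def readAcc {β : Type} (gl : (Fin n → Bool) → β) :
    List (Fin n) → (Fin n → Bool) → DTree Bool (Fin 1 × Fin n) β
  | [], acc => .leaf (gl acc)
  | i :: t, acc => .node ((0 : Fin 1), i) (fun a => readAcc gl t (Function.update acc i a))

lemma depth_readAcc {β : Type} (gl : (Fin n → Bool) → β) (l : List (Fin n)) :
    ∀ acc, (readAcc gl l acc).depth ≤ l.length := by
  induction l with
  | nil => intro acc; exact le_refl 0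
  | cons i t ih =>
      intro acc
      show 1 + univ.sup (fun a => (readAcc gl t (Function.update acc i a)).depth) ≤ t.length + 1
      have : univ.sup (fun a => (readAcc gl t (Function.update acc i a)).depth) ≤ t.length :=
        Finset.sup_le fun a _ => ih _
      omega

lemma eval_readAcc {β : Type} (gl : (Fin n → Bool) → β) (l : List (Fin n)) :
    ∀ acc x, (readAcc gl l acc).eval x
      = gl (fun i => if i ∈ l then x ((0 : Fin 1), i) else acc i) := by
  induction l with
  | nil =>
      intro acc x
      show gl acc = _
      congr 1
  | cons i t ih =>
      intro acc x
      show (readAcc gl t (Function.update acc i (x ((0 : Fin 1), i)))).eval x = _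
      rw [ih]
      congr 1
      funext i'
      by_cases h1 : i' ∈ t
      · rw [if_pos h1, if_pos (by simp [h1])]
      · by_cases h2 : i' = i
        · subst h2
          rw [if_neg h1, Function.update_self, if_pos (by simp)]
        · rw [if_neg h1, Function.update_of_ne h2, if_neg (by simp [h1, h2])]

lemma sel_nonempty (f : (Fin n → Bool) → Option Bool) (D0 D1 : (Fin n → Bool) → ℝ)
    (hBD : BalancedDist f D0 D1) :
    n ∈ {q | ∃ k, 0 < k ∧ ∃ T : DTree Bool (Fin k × Fin n) (Fin k × Bool), T.depth ≤ q ∧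
      1 - (1/3 : ℝ) ≤ prS (prodD fun x => (D0 x + D1 x) / 2)
        {x | f (fun i => x ((T.eval x).1, i)) = some (T.eval x).2}} := by
  obtain ⟨hD0, hD1, hs0, hs1⟩ := hBD
  set D : (Fin n → Bool) → ℝ := fun x => (D0 x + D1 x) / 2 with hD
  set gl : (Fin n → Bool) → (Fin 1 × Bool) := fun y => ((0 : Fin 1), (f y).getD false) with hgl
  refine ⟨1, one_pos, readAcc gl (List.finRange n) (fun _ => false), ?_, ?_⟩
  · calc (readAcc gl (List.finRange n) (fun _ => false)).depth
        ≤ (List.finRange n).length := depth_readAcc _ _ _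
      _ = n := List.length_finRange
  · set T := readAcc gl (List.finRange n) (fun _ => false) with hT
    have hev : ∀ x : (Fin 1 × Fin n) → Bool, T.eval x = gl (fun i => x ((0 : Fin 1), i)) := by
      intro x
      rw [hT, eval_readAcc]
      congr 1
      funext i
      rw [if_pos (List.mem_finRange i)]
    rw [prS_ind]
    have hpt : ∀ x : (Fin 1 × Fin n) → Bool,
        prodD D x * (if f (fun i => x ((T.eval x).1, i)) = some (T.eval x).2 then 1 else 0)
        = prodD D x := by
      intro x
      by_cases h0 : prodD D x = 0
      · rw [h0, zero_mul]
      · rw [if_pos, mul_one]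
        have hx : prodD D x = D (fun i => x ((0 : Fin 1), i)) := by
          show (∏ j : Fin 1, D fun i => x (j, i)) = _
          rw [Fin.prod_univ_one]
        rw [hx] at h0
        set y : Fin n → Bool := fun i => x ((0 : Fin 1), i) with hy
        have hDy : D0 y ≠ 0 ∨ D1 y ≠ 0 := by
          by_contra hc
          push_neg at hc
          apply h0
          rw [hD]
          show (D0 y + D1 y) / 2 = 0
          rw [hc.1, hc.2]
          norm_num
        have hfy : ∃ b, f y = some b := by
          rcases hDy with h | h
          · exact ⟨false, hs0 y h⟩
          · exact ⟨true, hs1 y h⟩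
        obtain ⟨b, hb⟩ := hfy
        rw [hev x]
        show f (fun i => x ((0 : Fin 1), i)) = some ((f y).getD false)
        rw [← hy, hb]
        rfl
    rw [Finset.sum_congr rfl fun x _ => hpt x]
    have htot : (∑ x : (Fin 1 × Fin n) → Bool, prodD D x) = 1 := by
      have := fubini (K := 1) (fun _ y => D y)
      rw [show (∑ x : (Fin 1 × Fin n) → Bool, prodD D x)
        = ∑ x : (Fin 1 × Fin n) → Bool, ∏ j : Fin 1, D (fun i => x (j, i)) from rfl, this]
      have hsD : (∑ y, D y) = 1 := by
        rw [hD]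
        show (∑ y, (D0 y + D1 y) / 2) = 1
        rw [← Finset.sum_div, Finset.sum_add_distrib, hD0.2, hD1.2]
        norm_num
      rw [Finset.prod_congr rfl fun j _ => hsD, Finset.prod_const_one]
    rw [htot]
    norm_num

lemma main_bound (f : (Fin n → Bool) → Option Bool) (D0 D1 : (Fin n → Bool) → ℝ)
    (hBD : BalancedDist f D0 D1) :
    corrC (1/3) D0 D1 ≤ 40 * selC (1/3) f (fun x => (D0 x + D1 x) / 2) := by
  obtain ⟨hD0, hD1, hs0, hs1⟩ := hBD
  set D : (Fin n → Bool) → ℝ := fun x => (D0 x + D1 x) / 2 with hD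
  have hq : selC (1/3) f D ∈ {q | ∃ k, 0 < k ∧
      ∃ T : DTree Bool (Fin k × Fin n) (Fin k × Bool), T.depth ≤ q ∧
      1 - (1/3 : ℝ) ≤ prS (prodD D)
        {x | f (fun i => x ((T.eval x).1, i)) = some (T.eval x).2}} :=
    Nat.sInf_mem ⟨n, sel_nonempty f D0 D1 ⟨hD0, hD1, hs0, hs1⟩⟩
  obtain ⟨k, hk, T, hdepth, hsucc⟩ := hq
  set pairD : (Fin n → Bool) → ℝ × ℝ := fun y => (D0 y, D1 y) with hpairD
  -- convert success to x-sum form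
  rw [prS_ind] at hsucc
  have hsx : 2/3 ≤ ∑ x : (Fin k × Fin n) → Bool,
      (∏ j, dm ((fun _ : Fin k => pairD) j) (fun i => x (j, i))) *
        (if f (fun i => x ((T.eval x).1, i)) = some (T.eval x).2 then 1 else 0) := by
    have e1 : (∑ x : (Fin k × Fin n) → Bool, prodD D x *
        (if f (fun i => x ((T.eval x).1, i)) = some (T.eval x).2 then 1 else 0))
        = ∑ x : (Fin k × Fin n) → Bool,
          (∏ j, dm ((fun _ : Fin k => pairD) j) (fun i => x (j, i))) *
          (if f (fun i => x ((T.eval x).1, i)) = some (T.eval x).2 then 1 else 0) :=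
      Finset.sum_congr rfl fun x _ => rfl
    rw [← e1]
    linarith
  have hcore : lsum Φbc T (fun _ : Fin k => pairD) ≤ 29/30 :=
    core f D0 D1 hD0 hD1 hs0 hs1 T hsx
  -- the amplified tree
  have hms1 : ms pairD = 1 := by
    show Real.sqrt (m0 pairD * m1 pairD) = 1
    rw [show m0 pairD = 1 from hD0.2, show m1 pairD = 1 from hD1.2]
    norm_num
  set init : Fin (40 * k) → (Fin n → Bool) → ℝ × ℝ := fun _ => pairD with hinit
  have hNN : NN init := fun j y => ⟨hD0.1 y, hD1.1 y⟩
  have hchain := chain_bound T pairD hms1 hcore (List.finRange 40)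
    (List.nodup_finRange 40) init (fun t _ j' => rfl)
  have hmsall : (∏ j : Fin (40 * k), ms (init j)) = 1 := by
    rw [Finset.prod_congr rfl fun j _ => hms1, Finset.prod_const_one]
  rw [hmsall, mul_one, List.length_finRange] at hchain
  set bigT := chainT T (List.finRange 40) with hbigT
  have hml := ml bigT init hNN
  have hW0 : (∏ j : Fin (40 * k), m0 (init j)) = 1 := by
    rw [Finset.prod_congr rfl fun j _ => show m0 (init j) = 1 from hD0.2,
      Finset.prod_const_one]
  have hW1 : (∏ j : Fin (40 * k), m1 (init j)) = 1 := by
    rw [Finset.prod_congr rfl fun j _ => show m1 (init j) = 1 from hD1.2,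
      Finset.prod_const_one]
  rw [hW0, hW1] at hml
  have hpow : ((29 : ℝ)/30) ^ 40 ≤ 1/3 := by norm_num
  -- success of the final tree
  have hp0 : prS (prodD D0) {x | (dec bigT init).eval x = false}
      = ∑ x : (Fin (40 * k) × Fin n) → Bool, (∏ j, (init j (fun i => x (j, i))).1) *
        (if (dec bigT init).eval x = false then 1 else 0) := by
    rw [prS_ind]
    exact Finset.sum_congr rfl fun x _ => rfl
  have hp1 : prS (prodD D1) {x | (dec bigT init).eval x = true}
      = ∑ x : (Fin (40 * k) × Fin n) → Bool, (∏ j, (init j (fun i => x (j, i))).2) *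
        (if (dec bigT init).eval x = true then 1 else 0) := by
    rw [prS_ind]
    exact Finset.sum_congr rfl fun x _ => rfl
  have hsucc2 : 1 - (1/3 : ℝ) ≤ (prS (prodD D0) {x | (dec bigT init).eval x = false}
      + prS (prodD D1) {x | (dec bigT init).eval x = true}) / 2 := by
    rw [hp0, hp1]
    linarith
  have hmem : 40 * selC (1/3) f D ∈ {q | ∃ k', 0 < k' ∧
      ∃ T' : DTree Bool (Fin k' × Fin n) Bool, T'.depth ≤ q ∧
      1 - (1/3 : ℝ) ≤ (prS (prodD D0) {x | T'.eval x = false}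
        + prS (prodD D1) {x | T'.eval x = true}) / 2} := by
    refine ⟨40 * k, by positivity, dec bigT init, ?_, hsucc2⟩
    rw [depth_dec]
    calc bigT.depth ≤ (List.finRange 40).length * T.depth := depth_chain T _
      _ = 40 * T.depth := by rw [List.length_finRange]
      _ ≤ 40 * selC (1/3) f D := Nat.mul_le_mul_left 40 hdepth
  exact Nat.sInf_le hmem

end CorrSelProof


/-- `corr_{1/3}(f,D) ≤ C · sel_{1/3}(f,D)` for every partial boolean `f`
and balanced input distribution `D = ½D0 + ½D1` for `f`. -/
theorem corr_le_sel :
    ∃ C : ℝ, 0 < C ∧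
      ∀ (n : ℕ) (f : (Fin n → Bool) → Option Bool) (D0 D1 : (Fin n → Bool) → ℝ),
        BalancedDist f D0 D1 →
          (corrC (1/3) D0 D1 : ℝ) ≤ C * (selC (1/3) f (fun x => (D0 x + D1 x) / 2) : ℝ) := by
  refine ⟨40, by norm_num, ?_⟩
  intro n f D0 D1 hBD
  have h := CorrSelProof.main_bound f D0 D1 hBD
  have h2 : ((corrC (1/3) D0 D1 : ℕ) : ℝ)
      ≤ ((40 * selC (1/3) f (fun x => (D0 x + D1 x) / 2) : ℕ) : ℝ) := Nat.cast_le.mpr h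
  push_cast at h2
  linarith
end

section
/- There is a universal constant C > 0 such that for every n ≥ 3 the following holds. Let XOR_n : {0,1}^n → {0,1} be the parity function and let D be the distribution on {0,1}^n generated as follows: sample z uniformly from {0,1}^{n−2}, set a := XOR_{n−2}(z), sample a uniform bit b; with probability 1/100 output x := a a z (first two bits both equal a, followed by z), and with probability 99/100 output x := b b z. Then sel_{1/3}(XOR_n, D) ≥ n−2, while corr_{1/3}(XOR_n, D) ≤ C. -/
open Finset

/- ===================== Auxiliary material ===================== -/

section AuxTree

variable {α ι β : Type}

/-- positions queried on the path followed by `x` -/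
def DTree.qs [DecidableEq ι] : DTree α ι β → (ι → α) → Finset ι
  | .leaf _, _ => ∅
  | .node i ch, x => insert i (DTree.qs (ch (x i)) x)

lemma DTree.card_qs_le_depth [DecidableEq ι] [Fintype α] (T : DTree α ι β) (x : ι → α) :
    (T.qs x).card ≤ T.depth := by
  induction T with
  | leaf b => simp [DTree.qs, DTree.depth]
  | node i ch ih =>
      have h1 := ih (x i)
      have h2 : (ch (x i)).depth ≤ Finset.univ.sup fun a => (ch a).depth :=
        Finset.le_sup (f := fun a => (ch a).depth) (Finset.mem_univ (x i))
      have h3 := Finset.card_insert_le i ((ch (x i)).qs x)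
      simp only [DTree.qs, DTree.depth]
      omega

lemma DTree.eval_qs_agree [DecidableEq ι] (T : DTree α ι β) :
    ∀ x y : ι → α, (∀ i ∈ T.qs x, y i = x i) → T.eval y = T.eval x ∧ T.qs y = T.qs x := by
  induction T with
  | leaf b => intro x y _; exact ⟨rfl, rfl⟩
  | node i ch ih =>
      intro x y h
      have hi : y i = x i := h i (by simp [DTree.qs])
      have hsub : ∀ j ∈ (ch (x i)).qs x, y j = x j := fun j hj => h j (by simp [DTree.qs, hj])
      obtain ⟨e1, e2⟩ := ih (x i) x y hsub
      constructor
      · show (ch (y i)).eval y = (ch (x i)).eval x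
        rw [hi, e1]
      · show insert i ((ch (y i)).qs y) = insert i ((ch (x i)).qs x)
        rw [hi, e2]

end AuxTree

section AuxParity

lemma XORn_cons {N : ℕ} (a : Bool) (y : Fin N → Bool) :
    XORn (Fin.cons a y) = xor a (XORn y) := by
  unfold XORn
  rw [Finset.card_filter, Finset.card_filter, Fin.sum_univ_succ]
  simp only [Fin.cons_zero, Fin.cons_succ]
  have hd : ∀ c : ℕ, decide ((1 + c) % 2 = 1) = !decide (c % 2 = 1) := by
    intro c; rw [← decide_not, decide_eq_decide]; omega
  cases a <;> simp [hd]

lemma fin_one_eq_succ {N : ℕ} : (1 : Fin (N+2)) = Fin.succ 0 := by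
  ext; simp

lemma XORtail_cons_cons {N : ℕ} (a c : Bool) (z : Fin (N+1) → Bool) :
    XORtail (Fin.cons a (Fin.cons c z) : Fin (N+3) → Bool) = XORn z := by
  unfold XORtail XORn
  rw [Finset.card_filter, Finset.card_filter, Fin.sum_univ_succ, Fin.sum_univ_succ]
  simp only [Fin.cons_zero, Fin.cons_succ, Fin.val_zero, Fin.val_succ]
  norm_num

lemma card_filter_parity_flip {N : ℕ} (P : Fin N → Prop) [DecidablePred P]
    (x : Fin N → Bool) (u : Fin N) (hu : P u) :
    ((Finset.univ.filter fun i => P i ∧ Function.update x u (!(x u)) i = true).card) % 2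
      ≠ ((Finset.univ.filter fun i => P i ∧ x i = true).card) % 2 := by
  classical
  have hfun : (fun i => if P i ∧ Function.update x u (!(x u)) i = true then (1:ℕ) else 0)
      = Function.update (fun i => if P i ∧ x i = true then (1:ℕ) else 0) u
          (if P u ∧ (!(x u)) = true then 1 else 0) := by
    funext i
    rcases eq_or_ne i u with rfl | h
    · simp
    · simp [Function.update_of_ne h]
  have key : (Finset.univ.filter fun i => P i ∧ Function.update x u (!(x u)) i = true).card
      = (if P u ∧ (!(x u)) = true then 1 else 0)
        + ∑ i ∈ Finset.univ.erase u, (if P i ∧ x i = true then (1:ℕ) else 0) := by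
    rw [Finset.card_filter, hfun, Finset.sum_update_of_mem (Finset.mem_univ u),
      Finset.sdiff_singleton_eq_erase]
  have key2 : (Finset.univ.filter fun i => P i ∧ x i = true).card
      = (if P u ∧ x u = true then 1 else 0)
        + ∑ i ∈ Finset.univ.erase u, (if P i ∧ x i = true then (1:ℕ) else 0) := by
    rw [Finset.card_filter, ← Finset.add_sum_erase _ _ (Finset.mem_univ u)]
  rw [key, key2]
  cases hx : x u <;> simp [hx, hu] <;> omega

lemma XORn_update {N : ℕ} (x : Fin N → Bool) (u : Fin N) :
    XORn (Function.update x u (!(x u))) = !(XORn x) := by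
  have h := card_filter_parity_flip (fun _ : Fin N => True) x u trivial
  beta_reduce at h
  simp only [true_and] at h
  unfold XORn
  rw [← decide_not, decide_eq_decide]
  omega

lemma XORtail_update {N : ℕ} (x : Fin N → Bool) (u : Fin N) (hu : 2 ≤ (u : ℕ)) :
    XORtail (Function.update x u (!(x u))) = !(XORtail x) := by
  have h := card_filter_parity_flip (fun i : Fin N => 2 ≤ (i : ℕ)) x u hu
  beta_reduce at h
  unfold XORtail
  rw [← decide_not, decide_eq_decide]
  omega

end AuxParity

section AuxSums

lemma sum_prod_fn {γ : Type} [Fintype γ] (k : ℕ) (g : γ → ℝ) :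
    ∑ x : Fin k → γ, ∏ j, g (x j) = (∑ t, g t) ^ k :=
  (Fintype.sum_pow g k).symm

lemma sum_prodD {n k : ℕ} (D : (Fin n → Bool) → ℝ) :
    ∑ x : (Fin k × Fin n) → Bool, prodD D x = (∑ w, D w) ^ k := by
  calc ∑ x : (Fin k × Fin n) → Bool, prodD D x
      = ∑ p : Fin k → Fin n → Bool, prodD D ((Equiv.curry (Fin k) (Fin n) Bool).symm p) :=
        (Equiv.sum_comp _ _).symm
    _ = ∑ p : Fin k → Fin n → Bool, ∏ j, D (p j) := rfl
    _ = (∑ w, D w) ^ k := (Fintype.sum_pow D k).symm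

lemma sum_decomp {N : ℕ} (F : (Fin (N+2) → Bool) → ℝ) :
    ∑ w, F w = ∑ a : Bool, ∑ c : Bool, ∑ z : Fin N → Bool, F (Fin.cons a (Fin.cons c z)) := by
  have hc2 : ∀ p : Bool × (Fin (N+1) → Bool),
      (Fin.consEquiv fun _ : Fin (N+2) => Bool) p = Fin.cons p.1 p.2 := fun _ => rfl
  have hc1 : ∀ p : Bool × (Fin N → Bool),
      (Fin.consEquiv fun _ : Fin (N+1) => Bool) p = Fin.cons p.1 p.2 := fun _ => rfl
  rw [← Equiv.sum_comp (Fin.consEquiv fun _ : Fin (N+2) => Bool) F, Fintype.sum_prod_type]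
  simp only [hc2]
  refine Finset.sum_congr rfl fun a _ => ?_
  rw [← Equiv.sum_comp (Fin.consEquiv fun _ : Fin (N+1) => Bool)
      (fun y => F (Fin.cons a y)), Fintype.sum_prod_type]
  simp only [hc1]

lemma sum_ite_XORn : ∀ (N : ℕ) (b : Bool) (r : ℝ),
    ∑ z : Fin (N+1) → Bool, (if XORn z = b then r else 0) = 2^N * r := by
  intro N
  induction N with
  | zero =>
      intro b r
      rw [← Equiv.sum_comp (Equiv.funUnique (Fin 1) Bool).symm
        (fun z => if XORn z = b then r else 0)]
      have hx1 : XORn (uniqueElim true : ∀ _ : Fin 1, Bool) = true := by decide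
      have hx2 : XORn (uniqueElim false : ∀ _ : Fin 1, Bool) = false := by decide
      rw [Fintype.sum_bool]
      cases b <;> simp [Equiv.funUnique, hx1, hx2]
  | succ N ih =>
      intro b r
      have hcN : ∀ p : Bool × (Fin (N+1) → Bool),
          (Fin.consEquiv fun _ : Fin (N+2) => Bool) p = Fin.cons p.1 p.2 := fun _ => rfl
      rw [← Equiv.sum_comp (Fin.consEquiv fun _ : Fin (N+2) => Bool)
        (fun z => if XORn z = b then r else 0), Fintype.sum_prod_type, Fintype.sum_bool]
      simp only [hcN, XORn_cons, Bool.true_xor, Bool.false_xor]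
      have hb : ∀ q : Bool, ((!q) = b) = (q = !b) := by
        intro q; cases q <;> cases b <;> simp
      simp only [hb]
      rw [ih, ih]
      ring

end AuxSums

section AuxD34

lemma D34_nonneg (m : ℕ) (x : Fin (m+3) → Bool) : 0 ≤ D34 m x := by
  unfold D34
  split_ifs <;> positivity

lemma D34_cons (m : ℕ) (a c : Bool) (z : Fin (m+1) → Bool) :
    D34 m (Fin.cons a (Fin.cons c z)) =
      if a = c then ((1:ℝ)/2)^(m+1) * (99/200 + if a = XORn z then 1/100 else 0) else 0 := by
  unfold D34
  rw [XORtail_cons_cons]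
  have e1 : (Fin.cons a (Fin.cons c z) : Fin (m+3) → Bool) 1 = c := by
    rw [fin_one_eq_succ, Fin.cons_succ, Fin.cons_zero]
  rw [e1, Fin.cons_zero]

lemma XORn_cons_cons {N : ℕ} (a c : Bool) (z : Fin (N+1) → Bool) :
    XORn (Fin.cons a (Fin.cons c z) : Fin (N+3) → Bool) = xor a (xor c (XORn z)) := by
  rw [XORn_cons, XORn_cons]

lemma D34_ratio (m : ℕ) (x : Fin (m+3) → Bool) (u : Fin (m+3)) (hu : 2 ≤ (u:ℕ)) :
    D34 m x ≤ 101/99 * D34 m (Function.update x u (!(x u))) := by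
  have h0 : (0 : Fin (m+3)) ≠ u := fun h => by simp [← h] at hu
  have h1 : (1 : Fin (m+3)) ≠ u := by
    intro h; rw [← h] at hu; rw [Fin.val_one] at hu; omega
  unfold D34
  rw [Function.update_of_ne h0, Function.update_of_ne h1, XORtail_update x u hu]
  by_cases h : x 0 = x 1
  · rw [if_pos h, if_pos h]
    have hc : (0:ℝ) < ((1:ℝ)/2)^(m+1) := by positivity
    by_cases hp : x 0 = XORtail x
    · rw [if_pos hp, if_neg (by rw [hp]; cases XORtail x <;> simp)]
      nlinarith
    · rw [if_neg hp, if_pos (by cases hx : x 0 <;> cases hxt : XORtail x <;> simp_all)]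
      nlinarith
  · rw [if_neg h, if_neg h]
    norm_num

lemma sum_D34 (m : ℕ) : ∑ w, D34 m w = 1 := by
  rw [sum_decomp (N := m+1) (D34 m)]
  rw [Fintype.sum_bool]
  rw [Fintype.sum_bool, Fintype.sum_bool]
  have h_tf : ∀ z : Fin (m+1) → Bool, D34 m (Fin.cons true (Fin.cons false z)) = 0 := by
    intro z; rw [D34_cons]; simp
  have h_ft : ∀ z : Fin (m+1) → Bool, D34 m (Fin.cons false (Fin.cons true z)) = 0 := by
    intro z; rw [D34_cons]; simp
  have h_d : ∀ z : Fin (m+1) → Bool,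
      D34 m (Fin.cons true (Fin.cons true z)) + D34 m (Fin.cons false (Fin.cons false z))
        = ((1:ℝ)/2)^(m+1) := by
    intro z; rw [D34_cons, D34_cons]; cases h : XORn z <;> simp [h] <;> ring
  simp only [h_tf, h_ft, Finset.sum_const_zero, add_zero, zero_add]
  rw [← Finset.sum_add_distrib, Finset.sum_congr rfl fun z _ => h_d z,
    Finset.sum_const, Finset.card_univ]
  have hcard : Fintype.card (Fin (m+1) → Bool) = 2^(m+1) := by
    simp [Fintype.card_fun]
  rw [hcard, nsmul_eq_mul]
  push_cast
  rw [← mul_pow]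
  norm_num

lemma condXOR_nonneg (m : ℕ) (b : Bool) (w : Fin (m+3) → Bool) : 0 ≤ condXOR (D34 m) b w := by
  unfold condXOR
  split_ifs
  · have := D34_nonneg m w; linarith
  · exact le_refl 0

lemma marginal_cond (m : ℕ) (b t : Bool) :
    ∑ w : Fin (m+3) → Bool, (if w 0 = t then condXOR (D34 m) b w else 0)
      = 99/200 + if t = b then 1/100 else 0 := by
  have hpow : ∀ A : ℝ, (2:ℝ)^m * (2 * (((1:ℝ)/2)^(m+1) * A)) = A := by
    intro A
    have h2 : (2:ℝ)^m * ((1:ℝ)/2)^m = 1 := by rw [← mul_pow]; norm_num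
    calc (2:ℝ)^m * (2 * (((1:ℝ)/2)^(m+1) * A))
        = ((2:ℝ)^m * ((1:ℝ)/2)^m) * (2 * ((1:ℝ)/2)) * A := by rw [pow_succ]; ring
      _ = A := by rw [h2]; norm_num
  rw [sum_decomp (N := m+1)]
  have hterm : ∀ (a c : Bool) (z : Fin (m+1) → Bool),
      (if (Fin.cons a (Fin.cons c z) : Fin (m+3) → Bool) 0 = t
        then condXOR (D34 m) b (Fin.cons a (Fin.cons c z)) else 0)
      = if a = t ∧ c = t then
          (if XORn z = b then
            2 * (((1:ℝ)/2)^(m+1) * (99/200 + if t = XORn z then 1/100 else 0)) else 0)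
        else 0 := by
    intro a c z
    unfold condXOR
    rw [XORn_cons_cons, D34_cons, Fin.cons_zero]
    cases a <;> cases c <;> cases t <;>
      simp [Bool.true_xor, Bool.false_xor, Bool.not_not]
  simp only [hterm]
  have hperZ : ∀ (a c : Bool),
      (∑ z : Fin (m+1) → Bool, if a = t ∧ c = t then
          (if XORn z = b then
            2 * (((1:ℝ)/2)^(m+1) * (99/200 + if t = XORn z then 1/100 else 0)) else 0)
        else 0)
      = if a = t ∧ c = t then 99/200 + (if t = b then (1/100:ℝ) else 0) else 0 := by
    intro a c
    by_cases h : a = t ∧ c = t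
    · simp only [if_pos h]
      have hz : ∀ z : Fin (m+1) → Bool,
          (if XORn z = b then
            2 * (((1:ℝ)/2)^(m+1) * (99/200 + if t = XORn z then 1/100 else 0)) else 0)
          = (if XORn z = b then
            2 * (((1:ℝ)/2)^(m+1) * (99/200 + if t = b then 1/100 else 0)) else 0) := by
        intro z
        by_cases hzb : XORn z = b
        · rw [if_pos hzb, if_pos hzb, hzb]
        · rw [if_neg hzb, if_neg hzb]
      rw [Finset.sum_congr rfl fun z _ => hz z, sum_ite_XORn m b _, hpow]
    · simp only [if_neg h, Finset.sum_const_zero]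
  simp only [hperZ]
  rw [Fintype.sum_bool, Fintype.sum_bool, Fintype.sum_bool]
  cases t <;> simp

end AuxD34


/- ===================== Part IV: selection lower bound ===================== -/

section AuxSelLB

lemma prS_eq_sum_filter {γ : Type} [Fintype γ] (D : γ → ℝ) (S : Set γ)
    [DecidablePred (· ∈ S)] :
    prS D S = ∑ x ∈ Finset.univ.filter (· ∈ S), D x := by
  unfold prS
  rw [Finset.sum_filter]
  exact Finset.sum_congr rfl fun x _ => Set.indicator_apply _ _ _

lemma pairing_bound {γ : Type} [Fintype γ] [DecidableEq γ] (W : γ → ℝ) (S : Set γ) (σ : γ → γ)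
    [DecidablePred (· ∈ S)]
    (hW : ∀ x, 0 ≤ W x) (htot : ∑ x, W x = 1)
    (hmass : ∀ x, W x ≤ 101/99 * W (σ x))
    (hinv : ∀ x, σ (σ x) = x) (hflip : ∀ x, x ∈ S → σ x ∉ S) :
    prS W S ≤ 101/200 := by
  rw [prS_eq_sum_filter]
  set A : Finset γ := Finset.univ.filter (· ∈ S) with hA
  have hmemS : ∀ x, x ∈ A → x ∈ S := fun x hx => (Finset.mem_filter.mp hx).2
  have key : ∑ x ∈ A, W x ≤ 101/99 * ∑ y ∈ Finset.univ \ A, W y := by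
    calc ∑ x ∈ A, W x ≤ ∑ x ∈ A, 101/99 * W (σ x) :=
          Finset.sum_le_sum fun x _ => hmass x
      _ = 101/99 * ∑ x ∈ A, W (σ x) := by rw [Finset.mul_sum]
      _ = 101/99 * ∑ y ∈ A.image σ, W y := by
          rw [Finset.sum_image]
          intro x _ y _ hxy
          have h := congrArg σ hxy
          rwa [hinv, hinv] at h
      _ ≤ 101/99 * ∑ y ∈ Finset.univ \ A, W y := by
          apply mul_le_mul_of_nonneg_left _ (by norm_num)
          apply Finset.sum_le_sum_of_subset_of_nonneg
          · intro y hy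
            obtain ⟨x, hx, rfl⟩ := Finset.mem_image.mp hy
            rw [Finset.mem_sdiff]
            exact ⟨Finset.mem_univ _, fun hmem => hflip x (hmemS x hx) (hmemS _ hmem)⟩
          · intro y _ _
            exact hW y
  have h2 := Finset.sum_sdiff (Finset.subset_univ A) (f := W)
  rw [htot] at h2
  linarith [key, h2]

lemma sample_update_ne {n k : ℕ} (x : (Fin k × Fin n) → Bool) {i j : Fin k} (u : Fin n) (v : Bool)
    (hij : j ≠ i) :
    (fun s => Function.update x (i,u) v (j, s)) = fun s => x (j, s) := by
  funext s
  exact Function.update_of_ne (by simp [Prod.ext_iff, hij]) _ _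

lemma sample_update_eq {n k : ℕ} (x : (Fin k × Fin n) → Bool) (i : Fin k) (u : Fin n) (v : Bool) :
    (fun s => Function.update x (i,u) v (i, s)) = Function.update (fun s => x (i, s)) u v := by
  funext s
  rcases eq_or_ne s u with rfl | h
  · simp
  · rw [Function.update_of_ne h, Function.update_of_ne (by simp [Prod.ext_iff, h])]

lemma prodD_update_le (m k : ℕ) (x : (Fin k × Fin (m+3)) → Bool) (i : Fin k) (u : Fin (m+3))
    (hu : 2 ≤ (u:ℕ)) :
    prodD (D34 m) x ≤ 101/99 * prodD (D34 m) (Function.update x (i,u) (!(x (i,u)))) := by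
  unfold prodD
  rw [← Finset.prod_erase_mul Finset.univ _ (Finset.mem_univ i),
      ← Finset.prod_erase_mul Finset.univ _ (Finset.mem_univ i)]
  have hrest : (∏ j ∈ Finset.univ.erase i,
        D34 m fun s => Function.update x (i,u) (!(x (i,u))) (j, s))
      = ∏ j ∈ Finset.univ.erase i, D34 m fun s => x (j, s) := by
    refine Finset.prod_congr rfl fun j hj => ?_
    rw [sample_update_ne x u _ (Finset.ne_of_mem_erase hj)]
  rw [hrest, sample_update_eq]
  have h1 := D34_ratio m (fun s => x (i,s)) u hu
  have hP : 0 ≤ ∏ j ∈ Finset.univ.erase i, D34 m fun s => x (j, s) :=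
    Finset.prod_nonneg fun _ _ => D34_nonneg _ _
  calc (∏ j ∈ Finset.univ.erase i, D34 m fun s => x (j,s)) * D34 m (fun s => x (i,s))
      ≤ (∏ j ∈ Finset.univ.erase i, D34 m fun s => x (j,s))
          * (101/99 * D34 m (Function.update (fun s => x (i,s)) u (!(x (i,u))))) := by
        exact mul_le_mul_of_nonneg_left h1 hP
    _ = 101/99 * ((∏ j ∈ Finset.univ.erase i, D34 m fun s => x (j,s))
          * D34 m (Function.update (fun s => x (i,s)) u (!(x (i,u))))) := by ring

variable (m k : ℕ) (T : DTree Bool (Fin k × Fin (m+3)) (Fin k × Bool))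

/-- the least unqueried tail coordinate of the output sample. -/
noncomputable def uF (hne : ∀ x : (Fin k × Fin (m+3)) → Bool,
    (Finset.univ.filter fun s : Fin (m+3) =>
      2 ≤ (s:ℕ) ∧ ((T.eval x).1, s) ∉ T.qs x).Nonempty)
    (x : (Fin k × Fin (m+3)) → Bool) : Fin (m+3) :=
  (Finset.univ.filter fun s : Fin (m+3) =>
      2 ≤ (s:ℕ) ∧ ((T.eval x).1, s) ∉ T.qs x).min' (hne x)

/-- the pairing involution. -/
noncomputable def sigF (hne : ∀ x : (Fin k × Fin (m+3)) → Bool,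
    (Finset.univ.filter fun s : Fin (m+3) =>
      2 ≤ (s:ℕ) ∧ ((T.eval x).1, s) ∉ T.qs x).Nonempty)
    (x : (Fin k × Fin (m+3)) → Bool) : (Fin k × Fin (m+3)) → Bool :=
  Function.update x ((T.eval x).1, uF m k T hne x) (!(x ((T.eval x).1, uF m k T hne x)))

variable (hne : ∀ x : (Fin k × Fin (m+3)) → Bool,
    (Finset.univ.filter fun s : Fin (m+3) =>
      2 ≤ (s:ℕ) ∧ ((T.eval x).1, s) ∉ T.qs x).Nonempty)

lemma uF_mem (x : (Fin k × Fin (m+3)) → Bool) :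
    2 ≤ ((uF m k T hne x : Fin (m+3)) : ℕ) ∧ ((T.eval x).1, uF m k T hne x) ∉ T.qs x := by
  have h := Finset.min'_mem _ (hne x)
  rw [Finset.mem_filter] at h
  exact h.2

lemma sig_eval_qs (x : (Fin k × Fin (m+3)) → Bool) :
    T.eval (sigF m k T hne x) = T.eval x ∧ T.qs (sigF m k T hne x) = T.qs x :=
  T.eval_qs_agree x (sigF m k T hne x)
    (fun q hq => Function.update_of_ne
      (fun h => (uF_mem m k T hne x).2 (by rw [← h]; exact hq)) _ _)

lemma uF_sig (x : (Fin k × Fin (m+3)) → Bool) :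
    uF m k T hne (sigF m k T hne x) = uF m k T hne x := by
  have hset : (Finset.univ.filter fun s : Fin (m+3) =>
      2 ≤ (s:ℕ) ∧ ((T.eval (sigF m k T hne x)).1, s) ∉ T.qs (sigF m k T hne x))
      = (Finset.univ.filter fun s : Fin (m+3) =>
      2 ≤ (s:ℕ) ∧ ((T.eval x).1, s) ∉ T.qs x) := by
    rw [(sig_eval_qs m k T hne x).1, (sig_eval_qs m k T hne x).2]
  unfold uF
  have hsub : (⟨Finset.univ.filter fun s : Fin (m+3) =>
      2 ≤ (s:ℕ) ∧ ((T.eval (sigF m k T hne x)).1, s) ∉ T.qs (sigF m k T hne x),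
      hne (sigF m k T hne x)⟩ : {s : Finset (Fin (m+3)) // s.Nonempty})
      = ⟨Finset.univ.filter fun s : Fin (m+3) =>
      2 ≤ (s:ℕ) ∧ ((T.eval x).1, s) ∉ T.qs x, hne x⟩ := Subtype.ext hset
  exact congrArg (fun p : {s : Finset (Fin (m+3)) // s.Nonempty} => p.1.min' p.2) hsub

lemma sig_invol (x : (Fin k × Fin (m+3)) → Bool) :
    sigF m k T hne (sigF m k T hne x) = x := by
  have h0 : sigF m k T hne (sigF m k T hne x)
      = Function.update (sigF m k T hne x)
          ((T.eval (sigF m k T hne x)).1, uF m k T hne (sigF m k T hne x))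
          (!(sigF m k T hne x
            ((T.eval (sigF m k T hne x)).1, uF m k T hne (sigF m k T hne x)))) := rfl
  rw [h0, (sig_eval_qs m k T hne x).1, uF_sig m k T hne x]
  have hval : sigF m k T hne x ((T.eval x).1, uF m k T hne x)
      = !(x ((T.eval x).1, uF m k T hne x)) := Function.update_self _ _ _
  rw [hval, Bool.not_not]
  have h2 : sigF m k T hne x
      = Function.update x ((T.eval x).1, uF m k T hne x)
          (!(x ((T.eval x).1, uF m k T hne x))) := rfl
  rw [h2, Function.update_idem, Function.update_eq_self]

lemma sig_flip (x : (Fin k × Fin (m+3)) → Bool) :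
    XORn (fun s => sigF m k T hne x ((T.eval x).1, s))
      = !(XORn fun s => x ((T.eval x).1, s)) := by
  have e : (fun s => sigF m k T hne x ((T.eval x).1, s))
      = Function.update (fun s => x ((T.eval x).1, s)) (uF m k T hne x)
          (!(x ((T.eval x).1, uF m k T hne x))) :=
    sample_update_eq x ((T.eval x).1) (uF m k T hne x) _
  rw [e]
  exact XORn_update _ _

lemma sig_mass (x : (Fin k × Fin (m+3)) → Bool) :
    prodD (D34 m) x ≤ 101/99 * prodD (D34 m) (sigF m k T hne x) :=
  prodD_update_le m k x ((T.eval x).1) (uF m k T hne x) (uF_mem m k T hne x).1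

lemma sel_lb (hd : T.depth ≤ m) :
    prS (prodD (D34 m)) {x | XORn (fun i => x ((T.eval x).1, i)) = (T.eval x).2} ≤ 101/200 := by
  have hcard_tail : (Finset.univ.filter fun s : Fin (m+3) => 2 ≤ (s:ℕ)).card = m+1 := by
    rw [Finset.card_filter, Fin.sum_univ_succ, Fin.sum_univ_succ]
    norm_num
  have hne : ∀ x : (Fin k × Fin (m+3)) → Bool,
      (Finset.univ.filter fun s : Fin (m+3) =>
        2 ≤ (s:ℕ) ∧ ((T.eval x).1, s) ∉ T.qs x).Nonempty := by
    intro x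
    rw [← Finset.card_pos]
    by_contra hno
    push_neg at hno
    have hzero : (Finset.univ.filter fun s : Fin (m+3) =>
        2 ≤ (s:ℕ) ∧ ((T.eval x).1, s) ∉ T.qs x).card = 0 := by omega
    have e1 : (Finset.univ.filter fun s : Fin (m+3) =>
        2 ≤ (s:ℕ) ∧ ((T.eval x).1, s) ∉ T.qs x)
        = (Finset.univ.filter fun s : Fin (m+3) => 2 ≤ (s:ℕ)).filter
            (fun s => ¬ (((T.eval x).1, s) ∈ T.qs x)) := by
      rw [Finset.filter_filter]
    have e2 : (((Finset.univ.filter fun s : Fin (m+3) => 2 ≤ (s:ℕ))).filter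
        (fun s => ((T.eval x).1, s) ∈ T.qs x)).card ≤ (T.qs x).card := by
      apply Finset.card_le_card_of_injOn (fun s => ((T.eval x).1, s))
      · intro s hs
        simp only [Finset.coe_filter, Finset.mem_coe, Finset.mem_filter, Set.mem_setOf_eq] at hs ⊢
        exact hs.2
      · intro s _ s' _ h
        exact congrArg Prod.snd h
    have e3 := Finset.card_filter_add_card_filter_not
        (s := Finset.univ.filter fun s : Fin (m+3) => 2 ≤ (s:ℕ))
        (p := fun s : Fin (m+3) => ((T.eval x).1, s) ∈ T.qs x)
    have e4 := T.card_qs_le_depth x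
    rw [e1] at hzero
    rw [hcard_tail] at e3
    omega
  apply pairing_bound _ _ (sigF m k T hne)
  · exact fun x => Finset.prod_nonneg fun _ _ => D34_nonneg _ _
  · rw [sum_prodD, sum_D34, one_pow]
  · exact sig_mass m k T hne
  · exact sig_invol m k T hne
  · intro x hx hmem
    rw [Set.mem_setOf_eq] at hx hmem
    rw [(sig_eval_qs m k T hne x).1] at hmem
    rw [sig_flip m k T hne x] at hmem
    rw [hx] at hmem
    simp at hmem

end AuxSelLB

/- ===================== Part IV': selection upper witness ===================== -/

def fullT (m k : ℕ) (hk : 0 < k) : List (Fin (m+3)) → (Fin (m+3) → Bool) →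
    DTree Bool (Fin k × Fin (m+3)) (Fin k × Bool)
  | [], acc => .leaf (⟨0, hk⟩, XORn acc)
  | i :: is, acc => .node (⟨0, hk⟩, i) fun a => fullT m k hk is (Function.update acc i a)

lemma fullT_depth (m k : ℕ) (hk : 0 < k) : ∀ (l : List (Fin (m+3))) (acc : Fin (m+3) → Bool),
    (fullT m k hk l acc).depth ≤ l.length := by
  intro l
  induction l with
  | nil => intro acc; simp [fullT, DTree.depth]
  | cons i is ih =>
      intro acc
      have hs : (Finset.univ.sup fun a : Bool =>
          (fullT m k hk is (Function.update acc i a)).depth) ≤ is.length :=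
        Finset.sup_le fun a _ => ih _
      simp only [fullT, DTree.depth, List.length_cons]
      omega

lemma fullT_eval (m k : ℕ) (hk : 0 < k) : ∀ (l : List (Fin (m+3))) (acc : Fin (m+3) → Bool)
    (x : (Fin k × Fin (m+3)) → Bool),
    (fullT m k hk l acc).eval x
      = (⟨0, hk⟩, XORn fun i => if i ∈ l then x (⟨0, hk⟩, i) else acc i) := by
  intro l
  induction l with
  | nil =>
      intro acc x
      show ((⟨0, hk⟩, XORn acc) : Fin k × Bool) = _
      simp [List.not_mem_nil]
  | cons j is ih =>
      intro acc x
      show (fullT m k hk is (Function.update acc j (x (⟨0,hk⟩, j)))).eval x = _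
      rw [ih]
      congr 1
      congr 1
      funext s
      by_cases hs : s ∈ is
      · rw [if_pos hs, if_pos (by simp [hs])]
      · rw [if_neg hs]
        rcases eq_or_ne s j with rfl | hsj
        · rw [Function.update_self, if_pos (by simp)]
        · rw [Function.update_of_ne hsj, if_neg (by simp [hs, hsj])]

lemma prS_univ {γ : Type} [Fintype γ] (D : γ → ℝ) :
    prS D (Set.univ : Set γ) = ∑ x, D x := by
  unfold prS
  exact Finset.sum_congr rfl fun x _ => by rw [Set.indicator_univ]

lemma sel_ge (m : ℕ) : m + 1 ≤ selC (1/3) (fun x => some (XORn x)) (D34 m) := by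
  have hmem : ∃ k, 0 < k ∧ ∃ T : DTree Bool (Fin k × Fin (m+3)) (Fin k × Bool),
      T.depth ≤ m+3 ∧ (1:ℝ) - 1/3 ≤ prS (prodD (D34 m))
        {x : (Fin k × Fin (m+3)) → Bool |
          (fun w => some (XORn w)) (fun i => x ((T.eval x).1, i)) = some (T.eval x).2} := by
    refine ⟨1, Nat.one_pos,
      fullT m 1 Nat.one_pos (Finset.univ.toList) (fun _ => false), ?_, ?_⟩
    · calc (fullT m 1 Nat.one_pos (Finset.univ.toList) (fun _ => false)).depth
          ≤ (Finset.univ.toList : List (Fin (m+3))).length := fullT_depth _ _ _ _ _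
        _ = m+3 := by rw [Finset.length_toList, Finset.card_univ, Fintype.card_fin]
    · have hset : {x : (Fin 1 × Fin (m+3)) → Bool |
          (fun w => some (XORn w)) (fun i => x
            (((fullT m 1 Nat.one_pos (Finset.univ.toList) (fun _ => false)).eval x).1, i))
          = some (((fullT m 1 Nat.one_pos (Finset.univ.toList) (fun _ => false)).eval x).2)}
          = Set.univ := by
        ext x
        simp only [Set.mem_setOf_eq, Set.mem_univ, iff_true]
        rw [fullT_eval]
        have hm : (fun i => if i ∈ (Finset.univ.toList : List (Fin (m+3)))
            then x (⟨0, Nat.one_pos⟩, i) else false)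
            = fun i => x (⟨0, Nat.one_pos⟩, i) := by
          funext i
          rw [if_pos (by simp [Finset.mem_toList])]
        exact congrArg some (congrArg XORn hm.symm)
      rw [hset]
      have h1 : prS (prodD (D34 m)) (Set.univ : Set ((Fin 1 × Fin (m+3)) → Bool)) = 1 := by
        rw [prS_univ, sum_prodD, sum_D34, one_pow]
      rw [h1]
      norm_num
  unfold selC
  refine le_csInf ⟨m+3, hmem⟩ ?_
  rintro q ⟨k, hk, T, hdep, hsucc⟩
  by_contra hq
  push_neg at hq
  have hdm : T.depth ≤ m := le_trans hdep (by omega)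
  have hlb := sel_lb m k T hdm
  have hset : {x : (Fin k × Fin (m+3)) → Bool |
      (fun w => some (XORn w)) (fun i => x ((T.eval x).1, i)) = some (T.eval x).2}
      = {x : (Fin k × Fin (m+3)) → Bool |
          XORn (fun i => x ((T.eval x).1, i)) = (T.eval x).2} := by
    ext x; simp only [Set.mem_setOf_eq, Option.some_inj]
  rw [hset] at hsucc
  linarith

/- ===================== Part V: correlation upper bound ===================== -/

def cTree (k n : ℕ) : List (Fin k) → ℕ → DTree Bool (Fin k × Fin (n+1)) Bool
  | [], c => .leaf (decide (k < 2 * c))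
  | j :: js, c => .node (j, (0 : Fin (n+1))) fun a => cTree k n js (c + if a then 1 else 0)

lemma cTree_depth (k n : ℕ) : ∀ (js : List (Fin k)) (c : ℕ),
    (cTree k n js c).depth ≤ js.length := by
  intro js
  induction js with
  | nil => intro c; simp [cTree, DTree.depth]
  | cons j js ih =>
      intro c
      have hs : (Finset.univ.sup fun a : Bool =>
          (cTree k n js (c + if a then 1 else 0)).depth) ≤ js.length :=
        Finset.sup_le fun a _ => ih _
      simp only [cTree, DTree.depth, List.length_cons]
      omega

lemma cTree_eval (k n : ℕ) : ∀ (js : List (Fin k)) (c : ℕ) (x : (Fin k × Fin (n+1)) → Bool),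
    (cTree k n js c).eval x
      = decide (k < 2 * (c + (js.map fun j => if x (j, 0) then 1 else 0).sum)) := by
  intro js
  induction js with
  | nil => intro c x; simp [cTree, DTree.eval]
  | cons j js ih =>
      intro c x
      show (cTree k n js (c + if x (j,0) then 1 else 0)).eval x = _
      rw [ih]
      simp only [List.map_cons, List.sum_cons, decide_eq_decide]
      omega

lemma cTree_eval_univ (k n : ℕ) (x : (Fin k × Fin (n+1)) → Bool) :
    (cTree k n (Finset.univ.toList) 0).eval x
      = decide (k < 2 * ∑ j, (if x (j, (0 : Fin (n+1))) then 1 else 0)) := by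
  rw [cTree_eval, Finset.sum_map_toList, Nat.zero_add]

lemma marg {γ : Type} [Fintype γ] (k : ℕ) (D : γ → ℝ) (h : γ → Bool)
    (g : (Fin k → Bool) → Bool) (v : Bool) :
    (∑ x : Fin k → γ, if g (fun j => h (x j)) = v then ∏ j, D (x j) else 0)
      = ∑ y : Fin k → Bool,
          if g y = v then ∏ j, (∑ t : γ, if h t = y j then D t else 0) else 0 := by
  classical
  have hx : ∀ y : Fin k → Bool, (∏ j, (∑ t : γ, if h t = y j then D t else 0))
      = ∑ x : Fin k → γ, (if (fun j => h (x j)) = y then ∏ j, D (x j) else 0) := by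
    intro y
    rw [Fintype.prod_sum (fun (j : Fin k) (t : γ) => if h t = y j then D t else 0)]
    refine Finset.sum_congr rfl fun x _ => ?_
    by_cases hxy : (fun j => h (x j)) = y
    · rw [if_pos hxy]
      refine Finset.prod_congr rfl fun j _ => ?_
      rw [if_pos (congrFun hxy j)]
    · rw [if_neg hxy]
      obtain ⟨j, hj⟩ : ∃ j, h (x j) ≠ y j := by
        by_contra hc; push_neg at hc; exact hxy (funext hc)
      exact Finset.prod_eq_zero (Finset.mem_univ j) (if_neg hj)
  calc (∑ x : Fin k → γ, if g (fun j => h (x j)) = v then ∏ j, D (x j) else 0)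
      = ∑ x : Fin k → γ, ∑ y : Fin k → Bool,
          if (fun j => h (x j)) = y then (if g y = v then ∏ j, D (x j) else 0) else 0 := by
        refine Finset.sum_congr rfl fun x _ => ?_
        rw [Fintype.sum_ite_eq (fun j => h (x j))
          (fun y => if g y = v then ∏ j, D (x j) else 0)]
    _ = ∑ y : Fin k → Bool, ∑ x : Fin k → γ,
          if (fun j => h (x j)) = y then (if g y = v then ∏ j, D (x j) else 0) else 0 :=
        Finset.sum_comm
    _ = ∑ y : Fin k → Bool,
          if g y = v then ∏ j, (∑ t : γ, if h t = y j then D t else 0) else 0 := by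
        refine Finset.sum_congr rfl fun y _ => ?_
        rw [hx y]
        by_cases hgv : g y = v
        · simp only [if_pos hgv]
        · simp only [if_neg hgv, ite_self, Finset.sum_const_zero]

lemma var_bound (k : ℕ) (q a : Bool → ℝ) (h1 : ∑ t, q t = 1) (h0 : ∑ t, q t * a t = 0) :
    ∑ y : Fin k → Bool, (∏ j, q (y j)) * (∑ j, a (y j))^2
      = k * ∑ t, q t * (a t)^2 := by
  classical
  have E : ∀ j j' : Fin k, (∑ y : Fin k → Bool, (∏ l, q (y l)) * (a (y j) * a (y j')))
      = if j = j' then (∑ t, q t * (a t)^2) else 0 := by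
    intro j j'
    rcases eq_or_ne j j' with rfl | hne
    · rw [if_pos rfl]
      have hpt : ∀ y : Fin k → Bool, (∏ l, q (y l)) * (a (y j) * a (y j))
          = ∏ l, (q (y l) * (if l = j then a (y l)^2 else 1)) := by
        intro y
        rw [Finset.prod_mul_distrib, Fintype.prod_ite_eq' j (fun l => a (y l)^2)]
        try ring
      rw [Finset.sum_congr rfl fun y _ => hpt y,
        ← Fintype.prod_sum (fun (l : Fin k) (t : Bool) => q t * (if l = j then a t^2 else 1))]
      have hl : ∀ l : Fin k, (∑ t, q t * (if l = j then a t^2 else 1))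
          = if l = j then (∑ t, q t * (a t)^2) else 1 := by
        intro l
        by_cases h : l = j
        · simp only [if_pos h]
        · simp only [if_neg h, mul_one, h1]
      rw [Finset.prod_congr rfl fun l _ => hl l,
        Fintype.prod_ite_eq' j (fun _ => ∑ t, q t * (a t)^2)]
    · rw [if_neg hne]
      have hpt : ∀ y : Fin k → Bool, (∏ l, q (y l)) * (a (y j) * a (y j'))
          = ∏ l, (q (y l) * ((if l = j then a (y l) else 1) * (if l = j' then a (y l) else 1))) := by
        intro y
        rw [Finset.prod_mul_distrib, Finset.prod_mul_distrib,
          Fintype.prod_ite_eq' j (fun l => a (y l)), Fintype.prod_ite_eq' j' (fun l => a (y l))]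
        try ring
      rw [Finset.sum_congr rfl fun y _ => hpt y,
        ← Fintype.prod_sum (fun (l : Fin k) (t : Bool) =>
          q t * ((if l = j then a t else 1) * (if l = j' then a t else 1)))]
      apply Finset.prod_eq_zero (Finset.mem_univ j)
      simp only [if_pos rfl, if_neg hne, mul_one]
      exact h0
  calc ∑ y : Fin k → Bool, (∏ j, q (y j)) * (∑ j, a (y j))^2
      = ∑ y : Fin k → Bool, ∑ j, ∑ j', (∏ l, q (y l)) * (a (y j) * a (y j')) := by
        refine Finset.sum_congr rfl fun y _ => ?_
        rw [pow_two, Finset.sum_mul_sum, Finset.mul_sum]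
        refine Finset.sum_congr rfl fun j _ => ?_
        rw [Finset.mul_sum]
    _ = ∑ j : Fin k, ∑ j' : Fin k,
          ∑ y : Fin k → Bool, (∏ l, q (y l)) * (a (y j) * a (y j')) := by
        rw [Finset.sum_comm]
        exact Finset.sum_congr rfl fun j _ => Finset.sum_comm
    _ = ∑ j : Fin k, ∑ j' : Fin k, if j = j' then (∑ t, q t * (a t)^2) else 0 :=
        Finset.sum_congr rfl fun j _ => Finset.sum_congr rfl fun j' _ => E j j'
    _ = ∑ _j : Fin k, (∑ t, q t * (a t)^2) := by
        refine Finset.sum_congr rfl fun j _ => ?_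
        rw [Fintype.sum_ite_eq j (fun _ => ∑ t, q t * (a t)^2)]
    _ = k * ∑ t, q t * (a t)^2 := by
        rw [Finset.sum_const, Finset.card_univ, Fintype.card_fin, nsmul_eq_mul]

lemma maj_success (k : ℕ) (hk : k = 100000) (b : Bool) :
    9/10 ≤ ∑ y : Fin k → Bool,
      (if (decide (k < 2 * ∑ j, (if y j then 1 else 0)) : Bool) = b
        then ∏ j, ((99:ℝ)/200 + if y j = b then 1/100 else 0) else 0) := by
  classical
  set q : Bool → ℝ := fun s => 99/200 + if s = b then 1/100 else 0 with hq
  set e : ℝ := q true with he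
  set a : Bool → ℝ := fun s => (if s then (1:ℝ) else 0) - e with ha
  have hq1 : ∑ t, q t = 1 := by
    rw [Fintype.sum_bool, hq]; cases b <;> norm_num
  have h0 : ∑ t, q t * a t = 0 := by
    rw [Fintype.sum_bool, hq, ha, he, hq]; cases b <;> norm_num
  have hqnn : ∀ t, 0 ≤ q t := by
    intro t; rw [hq]; dsimp only; split_ifs <;> norm_num
  have hV : ∑ t, q t * (a t)^2 ≤ 1/4 := by
    rw [Fintype.sum_bool, hq, ha, he, hq]; cases b <;> norm_num
  have hVnn : 0 ≤ ∑ t, q t * (a t)^2 := by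
    rw [Fintype.sum_bool]
    have := hqnn true; have := hqnn false
    positivity
  have hPnn : ∀ y : Fin k → Bool, 0 ≤ ∏ j, q (y j) :=
    fun y => Finset.prod_nonneg fun j _ => hqnn _
  have htotal : ∑ y : Fin k → Bool, ∏ j, q (y j) = 1 := by
    rw [sum_prod_fn, hq1, one_pow]
  have hvar := var_bound k q a hq1 h0
  have hdev : ∀ y : Fin k → Bool,
      ((decide (k < 2 * ∑ j, (if y j then 1 else 0)) : Bool) ≠ b) →
      ((k:ℝ)/200)^2 ≤ (∑ j, a (y j))^2 := by
    intro y hy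
    have hsum : ∑ j, a (y j) = (∑ j, (if y j then (1:ℝ) else 0)) - k * e := by
      rw [ha]
      rw [Finset.sum_sub_distrib, Finset.sum_const, Finset.card_univ, Fintype.card_fin,
        nsmul_eq_mul]
    have hcast : ((∑ j, (if y j then (1:ℕ) else 0) : ℕ) : ℝ)
        = ∑ j, (if y j then (1:ℝ) else 0) := by
      rw [Nat.cast_sum]
      exact Finset.sum_congr rfl fun j _ => by split_ifs <;> simp
    cases b
    · have hgt : k < 2 * ∑ j, (if y j then 1 else 0) := by
        by_contra hno
        exact hy (decide_eq_false hno)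
      have he' : e = 99/200 := by rw [he, hq]; norm_num
      have hreal : (k:ℝ) + 1 ≤ 2 * ∑ j, (if y j then (1:ℝ) else 0) := by
        have h' : (k:ℕ) + 1 ≤ 2 * ∑ j, (if y j then 1 else 0) := hgt
        calc ((k:ℝ)+1) = ((k+1 : ℕ):ℝ) := by push_cast; ring
          _ ≤ ((2 * ∑ j, (if y j then (1:ℕ) else 0) : ℕ):ℝ) := Nat.cast_le.mpr h'
          _ = 2 * ∑ j, (if y j then (1:ℝ) else 0) := by rw [Nat.cast_mul, hcast]; norm_num
      rw [hsum, he']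
      have hk0 : (0:ℝ) ≤ k := Nat.cast_nonneg k
      nlinarith [hreal]
    · have hle : 2 * ∑ j, (if y j then 1 else 0) ≤ k := by
        by_contra hno
        push_neg at hno
        exact hy (decide_eq_true hno)
      have he' : e = 101/200 := by rw [he, hq]; norm_num
      have hreal : 2 * ∑ j, (if y j then (1:ℝ) else 0) ≤ (k:ℝ) := by
        calc 2 * ∑ j, (if y j then (1:ℝ) else 0)
            = ((2 * ∑ j, (if y j then (1:ℕ) else 0) : ℕ):ℝ) := by
              rw [Nat.cast_mul, hcast]; norm_num
          _ ≤ (k:ℝ) := Nat.cast_le.mpr hle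
      rw [hsum, he']
      have hk0 : (0:ℝ) ≤ k := Nat.cast_nonneg k
      nlinarith [hreal]
  have hT2pos : (0:ℝ) < ((k:ℝ)/200)^2 := by rw [hk]; norm_num
  have herr : (∑ y : Fin k → Bool,
      if (decide (k < 2 * ∑ j, (if y j then 1 else 0)) : Bool) = b
        then 0 else ∏ j, q (y j))
      ≤ (k * ∑ t, q t * (a t)^2) / (((k:ℝ)/200)^2) := by
    rw [← hvar, Finset.sum_div]
    apply Finset.sum_le_sum
    intro y _
    by_cases hy : (decide (k < 2 * ∑ j, (if y j then 1 else 0)) : Bool) = b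
    · rw [if_pos hy]
      exact div_nonneg (mul_nonneg (hPnn y) (sq_nonneg _)) (le_of_lt hT2pos)
    · rw [if_neg hy]
      rw [le_div_iff₀ hT2pos]
      exact mul_le_mul_of_nonneg_left (hdev y hy) (hPnn y)
  have hbound : (k * ∑ t, q t * (a t)^2) / (((k:ℝ)/200)^2) ≤ 1/10 := by
    rw [hk]
    rw [div_le_iff₀ (by norm_num : (0:ℝ) < (((100000:ℕ):ℝ)/200)^2)]
    push_cast
    nlinarith [hV, hVnn]
  have hsplit : (∑ y : Fin k → Bool,
      if (decide (k < 2 * ∑ j, (if y j then 1 else 0)) : Bool) = b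
        then ∏ j, q (y j) else 0)
      = 1 - (∑ y : Fin k → Bool,
          if (decide (k < 2 * ∑ j, (if y j then 1 else 0)) : Bool) = b
            then 0 else ∏ j, q (y j)) := by
    rw [← htotal, ← Finset.sum_sub_distrib]
    refine Finset.sum_congr rfl fun y _ => ?_
    by_cases hy : (decide (k < 2 * ∑ j, (if y j then 1 else 0)) : Bool) = b
    · rw [if_pos hy, if_pos hy]; ring
    · rw [if_neg hy, if_neg hy]; ring
  show (9:ℝ)/10 ≤ ∑ y : Fin k → Bool,
      (if (decide (k < 2 * ∑ j, (if y j then 1 else 0)) : Bool) = b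
        then ∏ j, q (y j) else 0)
  rw [hsplit]
  linarith [le_trans herr hbound]

lemma corr_ub (m : ℕ) :
    corrC (1/3) (condXOR (D34 m) false) (condXOR (D34 m) true) ≤ 100000 := by
  have hmain : ∀ b : Bool, (9:ℝ)/10 ≤ prS (prodD (condXOR (D34 m) b))
      {x : (Fin 100000 × Fin (m+3)) → Bool |
        (cTree 100000 (m+2) Finset.univ.toList 0).eval x = b} := by
    intro b
    have hP : ∀ (s : Bool), (∑ t : Fin (m+3) → Bool, if t 0 = s then condXOR (D34 m) b t else 0)
        = 99/200 + if s = b then (1/100:ℝ) else 0 := marginal_cond m b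
    have step2 : ∀ p : Fin 100000 → (Fin (m+3) → Bool),
        (if ((Equiv.curry (Fin 100000) (Fin (m+3)) Bool).symm p) ∈
            {x : (Fin 100000 × Fin (m+3)) → Bool |
              (cTree 100000 (m+2) Finset.univ.toList 0).eval x = b}
          then prodD (condXOR (D34 m) b) ((Equiv.curry (Fin 100000) (Fin (m+3)) Bool).symm p)
          else 0)
        = if (decide (100000 < 2 * ∑ j, (if p j 0 then 1 else 0)) : Bool) = b
            then ∏ j, condXOR (D34 m) b (p j) else 0 := by
      intro p
      have hev := cTree_eval_univ 100000 (m+2)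
        ((Equiv.curry (Fin 100000) (Fin (m+3)) Bool).symm p)
      simp only [Set.mem_setOf_eq, hev]
      rfl
    rw [prS_eq_sum_filter, Finset.sum_filter,
      ← Equiv.sum_comp (Equiv.curry (Fin 100000) (Fin (m+3)) Bool).symm]
    simp only [step2]
    have hm := marg 100000 (condXOR (D34 m) b) (fun w => w 0)
      (fun y => decide (100000 < 2 * ∑ j, (if y j then 1 else 0))) b
    beta_reduce at hm
    rw [hm]
    simp only [hP]
    exact maj_success 100000 rfl b
  apply Nat.sInf_le
  refine ⟨100000, by norm_num, cTree 100000 (m+2) Finset.univ.toList 0, ?_, ?_⟩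
  · calc (cTree 100000 (m+2) Finset.univ.toList 0).depth
        ≤ (Finset.univ.toList : List (Fin 100000)).length := cTree_depth _ _ _ _
      _ = 100000 := by rw [Finset.length_toList, Finset.card_univ, Fintype.card_fin]
  · have h0 := hmain false
    have h1 := hmain true
    linarith

/-- For the Shaltiel-type distribution `D34 m` on `n = m + 3 ≥ 3` bits
(sample `z` uniform on `n−2` bits, `a := XOR(z)`, `b` uniform; output `a a z` w.p. 1/100,
`b b z` w.p. 99/100): `sel_{1/3}(XOR_n, D) ≥ n − 2` while `corr_{1/3}(XOR_n, D) ≤ C`. -/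
theorem sel_hard_corr_easy :
    ∃ C : ℕ, 0 < C ∧
      ∀ m : ℕ,
        m + 1 ≤ selC (1/3) (fun x => some (XORn x)) (D34 m) ∧
        corrC (1/3) (condXOR (D34 m) false) (condXOR (D34 m) true) ≤ C :=
  ⟨100000, by norm_num, fun m => ⟨sel_ge m, corr_ub m⟩⟩
end
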